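/- arXiv:2105.08451 — 4 statements merged into one kernel-verified Lean document; each statement's English description precedes it below -/
import Mathlib

section
/- Suppose that for every x ∈ ℝ^p, K(x, t) → 0 as |t| → ∞. Then the lagged covariances of the Lévy-dynamic spatio-temporal process converge to zero as the temporal lag tends to infinity: for all fixed s₁, s₂ ∈ ℝ^p and all sequences (t₁(n))_{n∈ℕ}, (t₂(n))_{n∈ℕ} of real numbers with |t₁(n) − t₂(n)| → ∞, one has Cov(f(s₁, t₁(n)), f(s₂, t₂(n))) → 0 as n → ∞. -/
open MeasureTheory ProbabilityTheory Filter
open scoped ENNReal NNReal Nat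

/-- The covariance of two real-valued random variables. -/
noncomputable def covar {Ω : Type*} [MeasurableSpace Ω] (P : Measure Ω) (X Y : Ω → ℝ) : ℝ :=
  (∫ ω, X ω * Y ω ∂P) - (∫ ω, X ω ∂P) * ∫ ω, Y ω ∂P

section Helpers

variable {Ω' : Type*} [MeasurableSpace Ω'] {P : Measure Ω'}

lemma aux_map_shuffle {α β γ : Type*} [MeasurableSpace α] [MeasurableSpace β] [MeasurableSpace γ]
    (μ : Measure α) (ν : Measure β) (ρ : Measure γ)
    [SFinite μ] [SFinite ν] [SFinite ρ] :
    (μ.prod (ν.prod ρ)).map (fun x => (x.2.1, (x.1, x.2.2))) = ν.prod (μ.prod ρ) := by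
  have mp1 : MeasurePreserving (MeasurableEquiv.prodAssoc.symm)
      (μ.prod (ν.prod ρ)) ((μ.prod ν).prod ρ) :=
    (measurePreserving_prodAssoc μ ν ρ).symm _
  have mp2 : MeasurePreserving (Prod.map Prod.swap (id : γ → γ))
      ((μ.prod ν).prod ρ) ((ν.prod μ).prod ρ) :=
    (Measure.measurePreserving_swap (μ := μ) (ν := ν)).prod (MeasurePreserving.id ρ)
  have mp3 := measurePreserving_prodAssoc ν μ ρ
  have := (mp3.comp (mp2.comp mp1)).map_eq
  have heq : (⇑MeasurableEquiv.prodAssoc ∘ Prod.map Prod.swap (id : γ → γ) ∘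
      ⇑MeasurableEquiv.prodAssoc.symm) = (fun x : α × β × γ => (x.2.1, (x.1, x.2.2))) := rfl
  rwa [heq] at this
lemma aux_map_assoc_symm {α β γ : Type*} [MeasurableSpace α] [MeasurableSpace β] [MeasurableSpace γ]
    (μ : Measure α) (ν : Measure β) (ρ : Measure γ)
    [SFinite μ] [SFinite ν] [SFinite ρ] :
    (μ.prod (ν.prod ρ)).map (fun x => ((x.1, x.2.1), x.2.2)) = (μ.prod ν).prod ρ := by
  have mp1 : MeasurePreserving (MeasurableEquiv.prodAssoc.symm)
      (μ.prod (ν.prod ρ)) ((μ.prod ν).prod ρ) :=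
    (measurePreserving_prodAssoc μ ν ρ).symm _
  exact mp1.map_eq

/-- lintegral of a product of functions of two "independent" random variables -/
lemma aux_map_shuffle2 {α β γ : Type*} [MeasurableSpace α] [MeasurableSpace β] [MeasurableSpace γ]
    (μ : Measure α) (ν : Measure β) (ρ : Measure γ)
    [SFinite μ] [SFinite ν] [SFinite ρ] :
    (μ.prod (ν.prod ρ)).map (fun x => ((x.1, x.2.2), x.2.1)) = (μ.prod ρ).prod ν := by
  have h1 : (fun x : α × β × γ => ((x.1, x.2.2), x.2.1))
      = (fun y : α × γ × β => ((y.1, y.2.1), y.2.2)) ∘ (Prod.map (id : α → α) Prod.swap) := rfl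
  rw [h1, ← Measure.map_map (by fun_prop) (by fun_prop)]
  have h2 : (μ.prod (ν.prod ρ)).map (Prod.map (id : α → α) Prod.swap) = μ.prod (ρ.prod ν) := by
    rw [← Measure.map_prod_map _ _ measurable_id measurable_swap, Measure.map_id,
      Measure.prod_swap]
  rw [h2, aux_map_assoc_symm]

lemma aux_lintegral_mul {α β : Type*} [MeasurableSpace α] [MeasurableSpace β]
    [IsFiniteMeasure P]
    {X : Ω' → α} {Y : Ω' → β} (hX : Measurable X) (hY : Measurable Y)
    (h : P.map (fun ω => (X ω, Y ω)) = (P.map X).prod (P.map Y))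
    {f : α → ℝ≥0∞} {g : β → ℝ≥0∞} (hf : Measurable f) (hg : Measurable g) :
    ∫⁻ ω, f (X ω) * g (Y ω) ∂P = (∫⁻ ω, f (X ω) ∂P) * ∫⁻ ω, g (Y ω) ∂P := by
  haveI : IsFiniteMeasure (P.map Y) := Measure.isFiniteMeasure_map P Y
  have h1 : ∫⁻ ω, f (X ω) * g (Y ω) ∂P
      = ∫⁻ z : α × β, f z.1 * g z.2 ∂(P.map (fun ω => (X ω, Y ω))) :=
    (lintegral_map ((hf.comp measurable_fst).mul (hg.comp measurable_snd))
      (hX.prodMk hY)).symm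
  rw [h1, h, lintegral_prod_mul hf.aemeasurable hg.aemeasurable,
    lintegral_map hf hX, lintegral_map hg hY]

/-- transfer a lintegral along equality of laws -/
lemma aux_lintegral_transfer {α : Type*} [MeasurableSpace α]
    {X Y : Ω' → α} (hX : Measurable X) (hY : Measurable Y)
    (h : P.map X = P.map Y) {f : α → ℝ≥0∞} (hf : Measurable f) :
    ∫⁻ ω, f (X ω) ∂P = ∫⁻ ω, f (Y ω) ∂P := by
  rw [← lintegral_map hf hX, h, lintegral_map hf hY]

/-- the second moment of the Poisson distribution is finite -/
lemma aux_poisson_sq_ne_top (r : ℝ≥0) :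
    (∑' n : ℕ, poissonMeasure r {n} * (n : ℝ≥0∞) ^ 2) ≠ ∞ := by
  have hsing : ∀ n : ℕ, poissonMeasure r {n}
      = ENNReal.ofReal (poissonPMFReal r n) := by
    intro n
    rw [poissonMeasure_singleton]
    rfl
  have hsummable : Summable (fun n : ℕ => poissonPMFReal r n * (n : ℝ) ^ 2) := by
    have hle : ∀ n : ℕ, poissonPMFReal r n * (n : ℝ) ^ 2
        ≤ Real.exp (-(r : ℝ)) * ((4 * r : ℝ) ^ n / n !) := by
      intro n
      have hn2 : ((n : ℝ)) ^ 2 ≤ (4 : ℝ) ^ n := by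
        have h1 : (n : ℝ) ≤ 2 ^ n := by
          exact_mod_cast (Nat.lt_two_pow_self (n := n)).le
        calc ((n : ℝ)) ^ 2 ≤ ((2 : ℝ) ^ n) ^ 2 := by
              apply pow_le_pow_left₀ (by positivity) h1
          _ = (4 : ℝ) ^ n := by
              rw [← pow_mul, mul_comm, pow_mul]; norm_num
      have : poissonPMFReal r n * (n : ℝ) ^ 2
          = Real.exp (-(r : ℝ)) * ((r : ℝ) ^ n * (n : ℝ) ^ 2 / n !) := by
        rw [poissonPMFReal]; ring
      rw [this]
      apply mul_le_mul_of_nonneg_left _ (Real.exp_nonneg _)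
      rw [div_le_div_iff_of_pos_right (by positivity)]
      · calc (r : ℝ) ^ n * (n : ℝ) ^ 2 ≤ (r : ℝ) ^ n * 4 ^ n := by
              apply mul_le_mul_of_nonneg_left hn2 (by positivity)
        _ = (4 * r : ℝ) ^ n := by rw [mul_pow]; ring
    apply Summable.of_nonneg_of_le (fun n => mul_nonneg poissonPMFReal_nonneg (by positivity)) hle
    exact (NormedSpace.expSeries_div_summable ((4 * r : ℝ))).mul_left _
  have heq : (∑' n : ℕ, poissonMeasure r {n} * (n : ℝ≥0∞) ^ 2)
      = ENNReal.ofReal (∑' n : ℕ, poissonPMFReal r n * (n : ℝ) ^ 2) := by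
    rw [ENNReal.ofReal_tsum_of_nonneg (fun n => mul_nonneg poissonPMFReal_nonneg (by positivity)) hsummable]
    congr 1
    ext n
    rw [hsing n, ENNReal.ofReal_mul poissonPMFReal_nonneg]
    congr 1
    rw [ENNReal.ofReal_pow (by positivity)]
    norm_num
  rw [heq]
  exact ENNReal.ofReal_ne_top
end Helpers

lemma aux_measurable_sum {Ω' : Type*} [MeasurableSpace Ω'] {N : Ω' → ℕ} (hN : Measurable N)
    {g : ℕ → Ω' → ℝ} (hg : ∀ j, Measurable (g j)) :
    Measurable (fun ω => ∑ j ∈ Finset.range (N ω), g j ω) := by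
  intro s hs
  have hset : (fun ω => ∑ j ∈ Finset.range (N ω), g j ω) ⁻¹' s
      = ⋃ n : ℕ, (N ⁻¹' {n}) ∩ ((fun ω => ∑ j ∈ Finset.range n, g j ω) ⁻¹' s) := by
    ext ω
    simp only [Set.mem_preimage, Set.mem_iUnion, Set.mem_inter_iff, Set.mem_singleton_iff]
    constructor
    · intro h; exact ⟨N ω, rfl, h⟩
    · rintro ⟨n, hn, h⟩; rw [hn]; exact h
  rw [hset]
  exact MeasurableSet.iUnion fun n => (hN (measurableSet_singleton n)).inter
    ((Finset.measurable_sum _ fun j _ => hg j) hs)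

/-- **Lévy-dynamic process: lagged covariances vanish as the temporal lag tends to infinity.**
If `K x t → 0` as `|t| → ∞` for every `x`, then for fixed spatial points `s₁, s₂` and
sequences of time points `t₁ n`, `t₂ n` with `|t₁ n - t₂ n| → ∞`, the covariance
`Cov (f (s₁, t₁ n), f (s₂, t₂ n)) → 0`, where
`f (s, t) = ∑_{j < N_t} K (M s - μ_{j,t}, t - τ) β_{j,t}`. -/
theorem levyDynamic_cov_tendsto_zero_of_time_lag
    {Ω : Type*} [MeasurableSpace Ω] (P : Measure Ω) [IsProbabilityMeasure P]
    (p : ℕ) (hp : 1 ≤ p)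
    (lam : NNReal) (hlam : 0 < lam) (τ : ℝ) (CK : ℝ) (hCK : 0 < CK)
    -- the Poisson counts
    (N : ℝ → Ω → ℕ) (hNmeas : ∀ t, Measurable (N t))
    (hNpois : ∀ t, P.map (N t) = poissonMeasure lam)
    (hNindep : iIndepFun (fun t : ℝ => N t) P)
    -- the i.i.d. copies (over j) of the (ℝ^p × ℝ)-valued process (μ_{j,·}, β_{j,·})
    (Z : ℕ → Ω → ℝ → (Fin p → ℝ) × ℝ) (hZmeas : ∀ j, Measurable (Z j))
    (hZindep : iIndepFun Z P)
    (hZident : ∀ j, P.map (Z j) = P.map (Z 0))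
    -- the family (Z j)_j is independent of the family (N t)_t
    (hNZ : IndepFun (fun ω => fun t => N t ω) (fun ω => fun j => Z j ω) P)
    -- for each j, the β-process is independent of the μ-process
    (hβμ : ∀ j, IndepFun (fun ω => fun t => (Z j ω t).2) (fun ω => fun t => (Z j ω t).1) P)
    -- the law of the pair (μ_{0,t}, β_{0,t}) does not depend on t
    (hstat : ∀ t₁ t₂ : ℝ,
      P.map (fun ω => Z 0 ω t₁) = P.map (fun ω => Z 0 ω t₂))
    -- β_{0,t} is square integrable
    (hβsq : ∀ t : ℝ, MemLp (fun ω => (Z 0 ω t).2) 2 P)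
    -- the autocovariance of β depends only on the lag and vanishes at infinity
    (Cβ : ℝ → ℝ)
    (hCβ : ∀ t₁ t₂ : ℝ,
      covar P (fun ω => (Z 0 ω t₁).2) (fun ω => (Z 0 ω t₂).2) = Cβ |t₁ - t₂|)
    (hCβ0 : Tendsto Cβ atTop (nhds 0))
    -- the random map M, independent of all of the above
    (M : Ω → (Fin p → ℝ) → (Fin p → ℝ)) (hMmeas : Measurable M)
    (hMindep : IndepFun M
      (fun ω => ((fun t => N t ω), fun j => Z j ω)) P)
    -- the kernel K, measurable, uniformly bounded by CK
    (K : (Fin p → ℝ) → ℝ → ℝ) (hKmeas : Measurable (Function.uncurry K))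
    (hKbdd : ∀ x t, |K x t| ≤ CK)
    -- the hypothesis: K (x, t) → 0 as |t| → ∞, for every x
    (hK0 : ∀ x, Tendsto (fun t => K x t) (Filter.comap (fun t : ℝ => |t|) atTop) (nhds 0))
    -- the conclusion
    (s₁ s₂ : Fin p → ℝ) (t₁ t₂ : ℕ → ℝ)
    (hlag : Tendsto (fun n => |t₁ n - t₂ n|) atTop atTop) :
    Tendsto (fun n =>
      covar P
        (fun ω => ∑ j ∈ Finset.range (N (t₁ n) ω),
          K (M ω s₁ - (Z j ω (t₁ n)).1) (t₁ n - τ) * (Z j ω (t₁ n)).2)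
        (fun ω => ∑ j ∈ Finset.range (N (t₂ n) ω),
          K (M ω s₂ - (Z j ω (t₂ n)).1) (t₂ n - τ) * (Z j ω (t₂ n)).2))
      atTop (nhds 0) := by
  classical
  -- ## basic measurability
  have hNf : Measurable (fun ω => fun t : ℝ => N t ω) := measurable_pi_lambda _ hNmeas
  have hZf : Measurable (fun ω => fun j : ℕ => Z j ω) := measurable_pi_lambda _ hZmeas
  have hMZfpair : Measurable (fun ω => (M ω, fun j : ℕ => Z j ω)) := hMmeas.prodMk hZf
  haveI iM : IsProbabilityMeasure (P.map M) := Measure.isProbabilityMeasure_map hMmeas.aemeasurable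
  haveI iN : IsProbabilityMeasure (P.map (fun ω => fun t : ℝ => N t ω)) :=
    Measure.isProbabilityMeasure_map hNf.aemeasurable
  haveI iZ : IsProbabilityMeasure (P.map (fun ω => fun j : ℕ => Z j ω)) :=
    Measure.isProbabilityMeasure_map hZf.aemeasurable
  haveI iZj : ∀ j, IsProbabilityMeasure (P.map (Z j)) :=
    fun j => Measure.isProbabilityMeasure_map (hZmeas j).aemeasurable
  -- ## the law identities
  have hMZf : IndepFun M (fun ω => fun j : ℕ => Z j ω) P := by
    exact hMindep.comp measurable_id measurable_snd
  have mapMZf : P.map (fun ω => (M ω, fun j : ℕ => Z j ω))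
      = (P.map M).prod (P.map (fun ω => fun j : ℕ => Z j ω)) :=
    (indepFun_iff_map_prod_eq_prod_map_map hMmeas.aemeasurable hZf.aemeasurable).1 hMZf
  have mapTriple : P.map (fun ω => (M ω, ((fun t : ℝ => N t ω), fun j : ℕ => Z j ω)))
      = (P.map M).prod ((P.map (fun ω => fun t : ℝ => N t ω)).prod
          (P.map (fun ω => fun j : ℕ => Z j ω))) := by
    rw [(indepFun_iff_map_prod_eq_prod_map_map hMmeas.aemeasurable
          (hNf.prodMk hZf).aemeasurable).1 hMindep,
        (indepFun_iff_map_prod_eq_prod_map_map hNf.aemeasurable hZf.aemeasurable).1 hNZ]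
  -- law of (N t, (M, Zf)) is a product
  have mapNt : ∀ t : ℝ, P.map (fun ω => (N t ω, (M ω, fun j : ℕ => Z j ω)))
      = (P.map (N t)).prod (P.map (fun ω => (M ω, fun j : ℕ => Z j ω))) := by
    intro t
    have h1 : P.map (fun ω => ((fun t' : ℝ => N t' ω), (M ω, fun j : ℕ => Z j ω)))
        = (P.map (fun ω => fun t' : ℝ => N t' ω)).prod
            (P.map (fun ω => (M ω, fun j : ℕ => Z j ω))) := by
      have hcomp : (fun ω => ((fun t' : ℝ => N t' ω), (M ω, fun j : ℕ => Z j ω)))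
          = (fun x : (((Fin p → ℝ) → (Fin p → ℝ)) × ((ℝ → ℕ) × (ℕ → ℝ → (Fin p → ℝ) × ℝ))) =>
              (x.2.1, (x.1, x.2.2)))
            ∘ (fun ω => (M ω, ((fun t' : ℝ => N t' ω), fun j : ℕ => Z j ω))) := rfl
      rw [hcomp, ← Measure.map_map (by fun_prop) (hMmeas.prodMk (hNf.prodMk hZf)), mapTriple,
        aux_map_shuffle, mapMZf]
    have hcomp2 : (fun ω => (N t ω, (M ω, fun j : ℕ => Z j ω)))
        = (Prod.map (fun nf : ℝ → ℕ => nf t) id)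
          ∘ (fun ω => ((fun t' : ℝ => N t' ω), (M ω, fun j : ℕ => Z j ω))) := rfl
    rw [hcomp2, ← Measure.map_map ((measurable_pi_apply t).prodMap measurable_id)
        (hNf.prodMk hMZfpair), h1,
      ← Measure.map_prod_map _ _ (measurable_pi_apply t) measurable_id,
      Measure.map_id, Measure.map_map (measurable_pi_apply t) hNf]
    rfl
  -- law of ((M, Z j), Z k) is a product, for j ≠ k
  have hMZj : ∀ j : ℕ, P.map (fun ω => (M ω, Z j ω)) = (P.map M).prod (P.map (Z j)) := by
    intro j
    have h : IndepFun M (Z j) P := hMZf.comp measurable_id (measurable_pi_apply j)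
    exact (indepFun_iff_map_prod_eq_prod_map_map hMmeas.aemeasurable
      (hZmeas j).aemeasurable).1 h
  have mapMZjZk : ∀ j k : ℕ, j ≠ k →
      P.map (fun ω => ((M ω, Z j ω), Z k ω))
        = (P.map (fun ω => (M ω, Z j ω))).prod (P.map (Z k)) := by
    intro j k hjk
    have hjkI : IndepFun (Z j) (Z k) P := hZindep.indepFun hjk
    have h2 : P.map (fun ω => (Z j ω, Z k ω)) = (P.map (Z j)).prod (P.map (Z k)) :=
      (indepFun_iff_map_prod_eq_prod_map_map (hZmeas j).aemeasurable
        (hZmeas k).aemeasurable).1 hjkI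
    have h3 : IndepFun M (fun ω => (Z j ω, Z k ω)) P :=
      hMZf.comp measurable_id ((measurable_pi_apply j).prodMk (measurable_pi_apply k))
    have h4 : P.map (fun ω => (M ω, (Z j ω, Z k ω)))
        = (P.map M).prod ((P.map (Z j)).prod (P.map (Z k))) := by
      rw [(indepFun_iff_map_prod_eq_prod_map_map hMmeas.aemeasurable
        ((hZmeas j).prodMk (hZmeas k)).aemeasurable).1 h3, h2]
    have hcomp : (fun ω => ((M ω, Z j ω), Z k ω))
        = (fun x : (((Fin p → ℝ) → (Fin p → ℝ)) × ((ℝ → (Fin p → ℝ) × ℝ) × (ℝ → (Fin p → ℝ) × ℝ))) =>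
            ((x.1, x.2.1), x.2.2))
          ∘ (fun ω => (M ω, (Z j ω, Z k ω))) := rfl
    rw [hcomp, ← Measure.map_map (by fun_prop)
      (hMmeas.prodMk ((hZmeas j).prodMk (hZmeas k))), h4, aux_map_assoc_symm, hMZj j]
  -- law of (M, Z j) does not depend on j
  have mapMZj : ∀ j : ℕ, P.map (fun ω => (M ω, Z j ω)) = P.map (fun ω => (M ω, Z 0 ω)) := by
    intro j
    rw [hMZj j, hMZj 0, hZident j]
  have hμm : Measurable (fun ω => fun t' : ℝ => (Z 0 ω t').1) :=
    measurable_pi_lambda _ (fun t' => measurable_fst.comp ((measurable_pi_apply t').comp (hZmeas 0)))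
  have hβm : Measurable (fun ω => fun t' : ℝ => (Z 0 ω t').2) :=
    measurable_pi_lambda _ (fun t' => measurable_snd.comp ((measurable_pi_apply t').comp (hZmeas 0)))
  -- the β-process is independent of (M, μ-process)
  have mapβ : P.map (fun ω => ((M ω, fun t' : ℝ => (Z 0 ω t').1), fun t' : ℝ => (Z 0 ω t').2))
      = (P.map (fun ω => (M ω, fun t' : ℝ => (Z 0 ω t').1))).prod
          (P.map (fun ω => fun t' : ℝ => (Z 0 ω t').2)) := by
    haveI : IsProbabilityMeasure (P.map (fun ω => fun t' : ℝ => (Z 0 ω t').1)) :=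
      Measure.isProbabilityMeasure_map hμm.aemeasurable
    haveI : IsProbabilityMeasure (P.map (fun ω => fun t' : ℝ => (Z 0 ω t').2)) :=
      Measure.isProbabilityMeasure_map hβm.aemeasurable
    -- split Z 0 into the (μ, β) processes
    have hsplit : P.map (fun ω => (M ω, (fun t' : ℝ => (Z 0 ω t').2, fun t' : ℝ => (Z 0 ω t').1)))
        = (P.map M).prod ((P.map (fun ω => fun t' : ℝ => (Z 0 ω t').2)).prod
            (P.map (fun ω => fun t' : ℝ => (Z 0 ω t').1))) := by
      have h3 : IndepFun M (fun ω => (fun t' : ℝ => (Z 0 ω t').2, fun t' : ℝ => (Z 0 ω t').1)) P := by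
        have : IndepFun M (Z 0) P := hMZf.comp measurable_id (measurable_pi_apply 0)
        exact this.comp measurable_id
          ((measurable_pi_lambda _ (fun t' => measurable_snd.comp (measurable_pi_apply t'))).prodMk
           (measurable_pi_lambda _ (fun t' => measurable_fst.comp (measurable_pi_apply t'))))
      have h2 : P.map (fun ω => (fun t' : ℝ => (Z 0 ω t').2, fun t' : ℝ => (Z 0 ω t').1))
          = (P.map (fun ω => fun t' : ℝ => (Z 0 ω t').2)).prod
            (P.map (fun ω => fun t' : ℝ => (Z 0 ω t').1)) :=
        (indepFun_iff_map_prod_eq_prod_map_map hβm.aemeasurable hμm.aemeasurable).1 (hβμ 0)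
      rw [(indepFun_iff_map_prod_eq_prod_map_map hMmeas.aemeasurable
        (hβm.prodMk hμm).aemeasurable).1 h3, h2]
    have hcomp : (fun ω => ((M ω, fun t' : ℝ => (Z 0 ω t').1), fun t' : ℝ => (Z 0 ω t').2))
        = (fun x : (((Fin p → ℝ) → (Fin p → ℝ)) × ((ℝ → ℝ) × (ℝ → (Fin p → ℝ)))) =>
            ((x.1, x.2.2), x.2.1))
          ∘ (fun ω => (M ω, (fun t' : ℝ => (Z 0 ω t').2, fun t' : ℝ => (Z 0 ω t').1))) := rfl
    rw [hcomp, ← Measure.map_map (by fun_prop) (hMmeas.prodMk (hβm.prodMk hμm)), hsplit]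
    -- now a shuffle: (m,(b,u)) ↦ ((m,u),b)
    have : ((P.map M).prod ((P.map (fun ω => fun t' : ℝ => (Z 0 ω t').2)).prod
            (P.map (fun ω => fun t' : ℝ => (Z 0 ω t').1)))).map
          (fun x : (((Fin p → ℝ) → (Fin p → ℝ)) × ((ℝ → ℝ) × (ℝ → (Fin p → ℝ)))) =>
            ((x.1, x.2.2), x.2.1))
        = (P.map (fun ω => (M ω, fun t' : ℝ => (Z 0 ω t').1))).prod
          (P.map (fun ω => fun t' : ℝ => (Z 0 ω t').2)) := by
      have hMμ : P.map (fun ω => (M ω, fun t' : ℝ => (Z 0 ω t').1))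
          = (P.map M).prod (P.map (fun ω => fun t' : ℝ => (Z 0 ω t').1)) := by
        have h : IndepFun M (fun ω => fun t' : ℝ => (Z 0 ω t').1) P :=
          (hMZf.comp measurable_id (measurable_pi_apply 0)).comp measurable_id
            (measurable_pi_lambda _ (fun t' => measurable_fst.comp (measurable_pi_apply t')))
        exact (indepFun_iff_map_prod_eq_prod_map_map hMmeas.aemeasurable hμm.aemeasurable).1 h
      rw [aux_map_shuffle2, hMμ]
    exact this

  -- ## scalar quantities
  set b1 : ℝ≥0∞ := ∫⁻ ω, (‖(Z 0 ω 0).2‖₊ : ℝ≥0∞) ∂P with hb1def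
  set b2 : ℝ≥0∞ := ∫⁻ ω, ((‖(Z 0 ω 0).2‖₊ : ℝ≥0∞)) ^ 2 ∂P with hb2def
  set m1 : ℝ≥0∞ := ∑' n : ℕ, poissonMeasure lam {n} * n with hm1def
  set m2 : ℝ≥0∞ := ∑' n : ℕ, poissonMeasure lam {n} * (n : ℝ≥0∞) ^ 2 with hm2def
  set Φ : (Fin p → ℝ) → ℝ → ℝ≥0∞ :=
    fun s t => ∫⁻ ω, (‖K (M ω s - (Z 0 ω t).1) (t - τ)‖₊ : ℝ≥0∞) ∂P with hΦdef
  -- measurability of the kernel evaluated along the process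
  have hK1 : ∀ t : ℝ, Measurable (fun x : Fin p → ℝ => K x (t - τ)) :=
    fun t => hKmeas.comp (measurable_id.prodMk measurable_const)
  have hfA : ∀ (s : Fin p → ℝ) (t : ℝ), Measurable
      (fun q : (((Fin p → ℝ) → (Fin p → ℝ)) × (ℝ → (Fin p → ℝ) × ℝ)) =>
        (‖K (q.1 s - (q.2 t).1) (t - τ)‖₊ : ℝ≥0∞)) := by
    intro s t
    refine Measurable.coe_nnreal_ennreal (Measurable.nnnorm ?_)
    exact (hK1 t).comp (((measurable_pi_apply s).comp measurable_fst).sub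
      (measurable_fst.comp ((measurable_pi_apply t).comp measurable_snd)))
  have hfA' : ∀ (s : Fin p → ℝ) (t : ℝ), Measurable
      (fun q : (((Fin p → ℝ) → (Fin p → ℝ)) × (ℝ → (Fin p → ℝ))) =>
        (‖K (q.1 s - q.2 t) (t - τ)‖₊ : ℝ≥0∞)) := by
    intro s t
    refine Measurable.coe_nnreal_ennreal (Measurable.nnnorm ?_)
    exact (hK1 t).comp (((measurable_pi_apply s).comp measurable_fst).sub
      ((measurable_pi_apply t).comp measurable_snd))
  have hgB : ∀ t : ℝ, Measurable (fun b : ℝ → ℝ => (‖b t‖₊ : ℝ≥0∞)) :=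
    fun t => (measurable_pi_apply t).nnnorm.coe_nnreal_ennreal
  have hgBz : ∀ t : ℝ, Measurable (fun z : ℝ → (Fin p → ℝ) × ℝ => (‖(z t).2‖₊ : ℝ≥0∞)) :=
    fun t => (measurable_snd.comp (measurable_pi_apply t)).nnnorm.coe_nnreal_ennreal
  -- t-invariance of β moments
  have hb1t : ∀ t : ℝ, ∫⁻ ω, (‖(Z 0 ω t).2‖₊ : ℝ≥0∞) ∂P = b1 := by
    intro t
    rw [hb1def]
    exact aux_lintegral_transfer ((measurable_pi_apply t).comp (hZmeas 0))
      ((measurable_pi_apply 0).comp (hZmeas 0))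
      (by
        have h1 : (fun ω => Z 0 ω t) = (fun z : ℝ → (Fin p → ℝ) × ℝ => z t) ∘ (Z 0) := rfl
        have h2 : (fun ω => Z 0 ω 0) = (fun z : ℝ → (Fin p → ℝ) × ℝ => z 0) ∘ (Z 0) := rfl
        exact hstat t 0)
      (f := fun z : (Fin p → ℝ) × ℝ => (‖z.2‖₊ : ℝ≥0∞)) measurable_snd.nnnorm.coe_nnreal_ennreal
  have hb1k : ∀ (j : ℕ) (t : ℝ), ∫⁻ ω, (‖(Z j ω t).2‖₊ : ℝ≥0∞) ∂P = b1 := by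
    intro j t
    have := aux_lintegral_transfer (hZmeas j) (hZmeas 0) (hZident j)
      (f := fun z : ℝ → (Fin p → ℝ) × ℝ => (‖(z t).2‖₊ : ℝ≥0∞)) (hgBz t)
    exact this.trans (hb1t t)
  have hb2t : ∀ t : ℝ, ∫⁻ ω, ((‖(Z 0 ω t).2‖₊ : ℝ≥0∞)) ^ 2 ∂P = b2 := by
    intro t
    rw [hb2def]
    exact aux_lintegral_transfer ((measurable_pi_apply t).comp (hZmeas 0))
      ((measurable_pi_apply 0).comp (hZmeas 0)) (hstat t 0)
      (f := fun z : (Fin p → ℝ) × ℝ => ((‖z.2‖₊ : ℝ≥0∞)) ^ 2)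
      (measurable_snd.nnnorm.coe_nnreal_ennreal.pow_const 2)
  -- finiteness of the moments
  have hb2fin : b2 ≠ ∞ := by
    have hInt : Integrable (fun ω => ((Z 0 ω 0).2) ^ 2) P := (hβsq 0).integrable_sq
    have h2 := hInt.2
    rw [HasFiniteIntegral] at h2
    rw [hb2def]
    have : ∀ ω, ((‖(Z 0 ω 0).2‖₊ : ℝ≥0∞)) ^ 2 = (‖((Z 0 ω 0).2) ^ 2‖₊ : ℝ≥0∞) := by
      intro ω
      rw [nnnorm_pow, ENNReal.coe_pow]
    rw [lintegral_congr this]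
    exact h2.ne
  have hb1fin : b1 ≠ ∞ := by
    have hInt : Integrable (fun ω => (Z 0 ω 0).2) P :=
      memLp_one_iff_integrable.1 ((hβsq 0).mono_exponent (by norm_num))
    have h2 := hInt.2
    rw [HasFiniteIntegral] at h2
    rw [hb1def]
    exact h2.ne
  have hm2fin : m2 ≠ ∞ := aux_poisson_sq_ne_top lam
  have hm1fin : m1 ≠ ∞ := by
    have hle : m1 ≤ m2 := by
      rw [hm1def, hm2def]
      apply ENNReal.tsum_le_tsum
      intro n
      apply mul_le_mul_right
      have : (n : ℝ≥0∞) ^ 2 = ((n ^ 2 : ℕ) : ℝ≥0∞) := by push_cast; ring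
      rw [this]
      exact_mod_cast Nat.le_self_pow (by norm_num) n
    exact fun h => hm2fin (top_le_iff.1 (h ▸ hle))
  have hΦle : ∀ (s : Fin p → ℝ) (t : ℝ), Φ s t ≤ ENNReal.ofReal CK := by
    intro s t
    rw [hΦdef]
    calc ∫⁻ ω, (‖K (M ω s - (Z 0 ω t).1) (t - τ)‖₊ : ℝ≥0∞) ∂P
        ≤ ∫⁻ _, ENNReal.ofReal CK ∂P := by
          apply lintegral_mono
          intro ω
          show (‖K (M ω s - (Z 0 ω t).1) (t - τ)‖₊ : ℝ≥0∞) ≤ ENNReal.ofReal CK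
          rw [← enorm_eq_nnnorm, Real.enorm_eq_ofReal_abs]
          exact ENNReal.ofReal_le_ofReal (hKbdd _ _)
      _ = ENNReal.ofReal CK := by simp
  -- ## the factorized first and second moments
  have hi : ∀ (s : Fin p → ℝ) (t : ℝ) (j : ℕ),
      ∫⁻ ω, (‖K (M ω s - (Z j ω t).1) (t - τ)‖₊ : ℝ≥0∞) * (‖(Z j ω t).2‖₊ : ℝ≥0∞) ∂P
        = Φ s t * b1 := by
    intro s t j
    have htrans := aux_lintegral_transfer (hMmeas.prodMk (hZmeas j)) (hMmeas.prodMk (hZmeas 0))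
      (mapMZj j)
      (f := fun q : (((Fin p → ℝ) → (Fin p → ℝ)) × (ℝ → (Fin p → ℝ) × ℝ)) =>
        (‖K (q.1 s - (q.2 t).1) (t - τ)‖₊ : ℝ≥0∞) * (‖(q.2 t).2‖₊ : ℝ≥0∞))
      ((hfA s t).mul ((hgBz t).comp measurable_snd))
    simp only at htrans
    rw [htrans]
    have hfact := aux_lintegral_mul (P := P) (hMmeas.prodMk hμm) hβm mapβ
      (f := fun q : (((Fin p → ℝ) → (Fin p → ℝ)) × (ℝ → (Fin p → ℝ))) =>
        (‖K (q.1 s - q.2 t) (t - τ)‖₊ : ℝ≥0∞))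
      (g := fun b : ℝ → ℝ => (‖b t‖₊ : ℝ≥0∞)) (hfA' s t) (hgB t)
    simp only at hfact
    rw [hfact, hΦdef]
    congr 1
    exact hb1t t
  have hii : ∀ (s : Fin p → ℝ) (t : ℝ),
      ∫⁻ ω, (‖K (M ω s - (Z 0 ω t).1) (t - τ)‖₊ : ℝ≥0∞) * ((‖(Z 0 ω t).2‖₊ : ℝ≥0∞)) ^ 2 ∂P
        = Φ s t * b2 := by
    intro s t
    have hfact := aux_lintegral_mul (P := P) (hMmeas.prodMk hμm) hβm mapβ
      (f := fun q : (((Fin p → ℝ) → (Fin p → ℝ)) × (ℝ → (Fin p → ℝ))) =>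
        (‖K (q.1 s - q.2 t) (t - τ)‖₊ : ℝ≥0∞))
      (g := fun b : ℝ → ℝ => ((‖b t‖₊ : ℝ≥0∞)) ^ 2) (hfA' s t) ((hgB t).pow_const 2)
    simp only at hfact
    rw [hfact, hΦdef]
    congr 1
    exact hb2t t
  have hiii : ∀ (s : Fin p → ℝ) (t : ℝ) (j k : ℕ), j ≠ k →
      ∫⁻ ω, ((‖K (M ω s - (Z j ω t).1) (t - τ)‖₊ : ℝ≥0∞) * (‖(Z j ω t).2‖₊ : ℝ≥0∞))
          * (‖(Z k ω t).2‖₊ : ℝ≥0∞) ∂P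
        = Φ s t * b1 * b1 := by
    intro s t j k hjk
    have hfact := aux_lintegral_mul (P := P) (hMmeas.prodMk (hZmeas j)) (hZmeas k)
      (mapMZjZk j k hjk)
      (f := fun q : (((Fin p → ℝ) → (Fin p → ℝ)) × (ℝ → (Fin p → ℝ) × ℝ)) =>
        (‖K (q.1 s - (q.2 t).1) (t - τ)‖₊ : ℝ≥0∞) * (‖(q.2 t).2‖₊ : ℝ≥0∞))
      (g := fun z : ℝ → (Fin p → ℝ) × ℝ => (‖(z t).2‖₊ : ℝ≥0∞))
      ((hfA s t).mul ((hgBz t).comp measurable_snd)) (hgBz t)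
    simp only at hfact
    rw [hfact, hi s t j, hb1k k t]
  have hiv : ∀ (t : ℝ) (n : ℕ)
      (H : (((Fin p → ℝ) → (Fin p → ℝ)) × (ℕ → ℝ → (Fin p → ℝ) × ℝ)) → ℝ≥0∞),
      Measurable H →
      ∫⁻ ω, (if N t ω = n then (1 : ℝ≥0∞) else 0) * H (M ω, fun j => Z j ω) ∂P
        = poissonMeasure lam {n} * ∫⁻ ω, H (M ω, fun j => Z j ω) ∂P := by
    intro t n H hH
    have hfact := aux_lintegral_mul (P := P) (hNmeas t) hMZfpair (mapNt t)
      (f := fun m : ℕ => if m = n then (1 : ℝ≥0∞) else 0)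
      (g := H) measurable_from_top hH
    rw [hfact]
    congr 1
    have hind : ∀ ω, (if N t ω = n then (1 : ℝ≥0∞) else 0)
        = Set.indicator (N t ⁻¹' {n}) (fun _ => (1 : ℝ≥0∞)) ω := by
      intro ω
      simp [Set.indicator_apply, Set.mem_preimage]
    rw [lintegral_congr hind, lintegral_indicator_const ((hNmeas t) (measurableSet_singleton n)),
      one_mul, ← hNpois t, Measure.map_apply (hNmeas t) (measurableSet_singleton n)]

  -- pointwise decomposition over the value of N t
  have hsumrep : ∀ (t : ℝ) (G : ℕ → Ω → ℝ≥0∞) (ω : Ω),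
      G (N t ω) ω = ∑' n : ℕ, (if N t ω = n then (1 : ℝ≥0∞) else 0) * G n ω := by
    intro t G ω
    rw [tsum_eq_single (N t ω) (fun b hb => by rw [if_neg (fun h => hb h.symm), zero_mul]),
      if_pos rfl, one_mul]
  -- measurability of the summands
  have hABmeas : ∀ (s : Fin p → ℝ) (t : ℝ) (j : ℕ), Measurable (fun ω =>
      (‖K (M ω s - (Z j ω t).1) (t - τ)‖₊ : ℝ≥0∞) * (‖(Z j ω t).2‖₊ : ℝ≥0∞)) := by
    intro s t j
    exact ((hfA s t).comp (hMmeas.prodMk (hZmeas j))).mul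
      ((hgBz t).comp (hZmeas j))
  have hHmeas : ∀ (s : Fin p → ℝ) (t : ℝ) (n : ℕ), Measurable
      (fun q : (((Fin p → ℝ) → (Fin p → ℝ)) × (ℕ → ℝ → (Fin p → ℝ) × ℝ)) =>
        ∑ j ∈ Finset.range n,
          (‖K (q.1 s - (q.2 j t).1) (t - τ)‖₊ : ℝ≥0∞) * (‖(q.2 j t).2‖₊ : ℝ≥0∞)) := by
    intro s t n
    apply Finset.measurable_sum
    intro j _
    exact ((hfA s t).comp (measurable_fst.prodMk
        ((measurable_pi_apply j).comp measurable_snd))).mul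
      ((hgBz t).comp ((measurable_pi_apply j).comp measurable_snd))
  -- ## first moment
  have hF1 : ∀ (s : Fin p → ℝ) (t : ℝ),
      ∫⁻ ω, ∑ j ∈ Finset.range (N t ω),
          (‖K (M ω s - (Z j ω t).1) (t - τ)‖₊ : ℝ≥0∞) * (‖(Z j ω t).2‖₊ : ℝ≥0∞) ∂P
        = m1 * (Φ s t * b1) := by
    intro s t
    have h0 : ∫⁻ ω, ∑ j ∈ Finset.range (N t ω),
          (‖K (M ω s - (Z j ω t).1) (t - τ)‖₊ : ℝ≥0∞) * (‖(Z j ω t).2‖₊ : ℝ≥0∞) ∂P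
        = ∑' n : ℕ, ∫⁻ ω, (if N t ω = n then (1 : ℝ≥0∞) else 0) *
            ∑ j ∈ Finset.range n,
              (‖K (M ω s - (Z j ω t).1) (t - τ)‖₊ : ℝ≥0∞) * (‖(Z j ω t).2‖₊ : ℝ≥0∞) ∂P := by
      have hmeas : ∀ n : ℕ, Measurable (fun ω => (if N t ω = n then (1 : ℝ≥0∞) else 0) *
          ∑ j ∈ Finset.range n,
            (‖K (M ω s - (Z j ω t).1) (t - τ)‖₊ : ℝ≥0∞) * (‖(Z j ω t).2‖₊ : ℝ≥0∞)) := by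
        intro n
        have h1 : Measurable (fun ω => if N t ω = n then (1 : ℝ≥0∞) else 0) :=
          (measurable_from_top (f := fun m : ℕ => if m = n then (1 : ℝ≥0∞) else 0)).comp
            (hNmeas t)
        exact h1.mul (Finset.measurable_sum _ (fun j _ => hABmeas s t j))
      have hrep := hsumrep t (fun n ω => ∑ j ∈ Finset.range n,
        (‖K (M ω s - (Z j ω t).1) (t - τ)‖₊ : ℝ≥0∞) * (‖(Z j ω t).2‖₊ : ℝ≥0∞))
      rw [lintegral_congr hrep, lintegral_tsum (fun n => (hmeas n).aemeasurable)]
    rw [h0]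
    have h1 : ∀ n : ℕ, ∫⁻ ω, (if N t ω = n then (1 : ℝ≥0∞) else 0) *
            ∑ j ∈ Finset.range n,
              (‖K (M ω s - (Z j ω t).1) (t - τ)‖₊ : ℝ≥0∞) * (‖(Z j ω t).2‖₊ : ℝ≥0∞) ∂P
          = poissonMeasure lam {n} * (n * (Φ s t * b1)) := by
      intro n
      have h2 := hiv t n _ (hHmeas s t n)
      simp only at h2
      rw [h2]
      congr 1
      rw [lintegral_finset_sum _ (fun j _ => hABmeas s t j)]
      rw [Finset.sum_congr rfl (fun j _ => hi s t j), Finset.sum_const, Finset.card_range,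
        nsmul_eq_mul]
    rw [tsum_congr h1]
    simp_rw [← mul_assoc]
    rw [ENNReal.tsum_mul_right, ENNReal.tsum_mul_right, hm1def]
  -- ## second moment
  have hF2 : ∀ (s : Fin p → ℝ) (t : ℝ),
      ∫⁻ ω, (∑ j ∈ Finset.range (N t ω),
          (‖K (M ω s - (Z j ω t).1) (t - τ)‖₊ : ℝ≥0∞) * (‖(Z j ω t).2‖₊ : ℝ≥0∞)) ^ 2 ∂P
        ≤ m2 * (ENNReal.ofReal CK * (Φ s t * (b2 + b1 * b1))) := by
    intro s t
    have h0 : ∫⁻ ω, (∑ j ∈ Finset.range (N t ω),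
          (‖K (M ω s - (Z j ω t).1) (t - τ)‖₊ : ℝ≥0∞) * (‖(Z j ω t).2‖₊ : ℝ≥0∞)) ^ 2 ∂P
        = ∑' n : ℕ, ∫⁻ ω, (if N t ω = n then (1 : ℝ≥0∞) else 0) *
            (∑ j ∈ Finset.range n,
              (‖K (M ω s - (Z j ω t).1) (t - τ)‖₊ : ℝ≥0∞) * (‖(Z j ω t).2‖₊ : ℝ≥0∞)) ^ 2 ∂P := by
      have hmeas : ∀ n : ℕ, Measurable (fun ω => (if N t ω = n then (1 : ℝ≥0∞) else 0) *
          (∑ j ∈ Finset.range n,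
            (‖K (M ω s - (Z j ω t).1) (t - τ)‖₊ : ℝ≥0∞) * (‖(Z j ω t).2‖₊ : ℝ≥0∞)) ^ 2) := by
        intro n
        have h1 : Measurable (fun ω => if N t ω = n then (1 : ℝ≥0∞) else 0) :=
          (measurable_from_top (f := fun m : ℕ => if m = n then (1 : ℝ≥0∞) else 0)).comp
            (hNmeas t)
        exact h1.mul ((Finset.measurable_sum _ (fun j _ => hABmeas s t j)).pow_const 2)
      have hrep := hsumrep t (fun n ω => (∑ j ∈ Finset.range n,
        (‖K (M ω s - (Z j ω t).1) (t - τ)‖₊ : ℝ≥0∞) * (‖(Z j ω t).2‖₊ : ℝ≥0∞)) ^ 2)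
      rw [lintegral_congr hrep, lintegral_tsum (fun n => (hmeas n).aemeasurable)]
    rw [h0]
    have h1 : ∀ n : ℕ, ∫⁻ ω, (if N t ω = n then (1 : ℝ≥0∞) else 0) *
            (∑ j ∈ Finset.range n,
              (‖K (M ω s - (Z j ω t).1) (t - τ)‖₊ : ℝ≥0∞) * (‖(Z j ω t).2‖₊ : ℝ≥0∞)) ^ 2 ∂P
          ≤ poissonMeasure lam {n} *
              ((n : ℝ≥0∞) ^ 2 * (ENNReal.ofReal CK * (Φ s t * (b2 + b1 * b1)))) := by
      intro n
      have h2 := hiv t n _ ((hHmeas s t n).pow_const 2)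
      simp only at h2
      rw [h2]
      apply mul_le_mul_right
      -- expand the square
      have hexp : ∀ ω : Ω, (∑ j ∈ Finset.range n,
            (‖K (M ω s - (Z j ω t).1) (t - τ)‖₊ : ℝ≥0∞) * (‖(Z j ω t).2‖₊ : ℝ≥0∞)) ^ 2
          = ∑ j ∈ Finset.range n, ∑ k ∈ Finset.range n,
              ((‖K (M ω s - (Z j ω t).1) (t - τ)‖₊ : ℝ≥0∞) * (‖(Z j ω t).2‖₊ : ℝ≥0∞)) *
              ((‖K (M ω s - (Z k ω t).1) (t - τ)‖₊ : ℝ≥0∞) * (‖(Z k ω t).2‖₊ : ℝ≥0∞)) := by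
        intro ω
        rw [sq, Finset.sum_mul_sum]
      rw [lintegral_congr hexp,
        lintegral_finset_sum _ (fun j _ => Finset.measurable_sum (f := fun k ω => _ * _) _
          (fun k _ => (hABmeas s t j).mul (hABmeas s t k)))]
      have hterm : ∀ j ∈ Finset.range n, ∫⁻ ω, ∑ k ∈ Finset.range n,
            ((‖K (M ω s - (Z j ω t).1) (t - τ)‖₊ : ℝ≥0∞) * (‖(Z j ω t).2‖₊ : ℝ≥0∞)) *
            ((‖K (M ω s - (Z k ω t).1) (t - τ)‖₊ : ℝ≥0∞) * (‖(Z k ω t).2‖₊ : ℝ≥0∞)) ∂P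
          ≤ n * (ENNReal.ofReal CK * (Φ s t * (b2 + b1 * b1))) := by
        intro j _
        rw [lintegral_finset_sum (f := fun k ω => _ * _) _ (fun k _ => (hABmeas s t j).mul (hABmeas s t k))]
        have hone : ∀ k ∈ Finset.range n, ∫⁻ ω,
              ((‖K (M ω s - (Z j ω t).1) (t - τ)‖₊ : ℝ≥0∞) * (‖(Z j ω t).2‖₊ : ℝ≥0∞)) *
              ((‖K (M ω s - (Z k ω t).1) (t - τ)‖₊ : ℝ≥0∞) * (‖(Z k ω t).2‖₊ : ℝ≥0∞)) ∂P
            ≤ ENNReal.ofReal CK * (Φ s t * (b2 + b1 * b1)) := by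
          intro k _
          have hAle : ∀ (j' : ℕ) (ω : Ω),
              (‖K (M ω s - (Z j' ω t).1) (t - τ)‖₊ : ℝ≥0∞) ≤ ENNReal.ofReal CK := by
            intro j' ω
            rw [← enorm_eq_nnnorm, Real.enorm_eq_ofReal_abs]
            exact ENNReal.ofReal_le_ofReal (hKbdd _ _)
          rcases eq_or_ne j k with rfl | hjk
          · -- diagonal term
            have hpt : ∀ ω : Ω,
                ((‖K (M ω s - (Z j ω t).1) (t - τ)‖₊ : ℝ≥0∞) * (‖(Z j ω t).2‖₊ : ℝ≥0∞)) *
                ((‖K (M ω s - (Z j ω t).1) (t - τ)‖₊ : ℝ≥0∞) * (‖(Z j ω t).2‖₊ : ℝ≥0∞))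
                ≤ ENNReal.ofReal CK *
                  ((‖K (M ω s - (Z j ω t).1) (t - τ)‖₊ : ℝ≥0∞) * (‖(Z j ω t).2‖₊ : ℝ≥0∞) ^ 2) := by
              intro ω
              have : ((‖K (M ω s - (Z j ω t).1) (t - τ)‖₊ : ℝ≥0∞) * (‖(Z j ω t).2‖₊ : ℝ≥0∞)) *
                  ((‖K (M ω s - (Z j ω t).1) (t - τ)‖₊ : ℝ≥0∞) * (‖(Z j ω t).2‖₊ : ℝ≥0∞))
                  = (‖K (M ω s - (Z j ω t).1) (t - τ)‖₊ : ℝ≥0∞) *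
                    ((‖K (M ω s - (Z j ω t).1) (t - τ)‖₊ : ℝ≥0∞) * (‖(Z j ω t).2‖₊ : ℝ≥0∞) ^ 2) := by
                ring
              rw [this]
              exact mul_le_mul_left (hAle j ω) _
            calc ∫⁻ ω, ((‖K (M ω s - (Z j ω t).1) (t - τ)‖₊ : ℝ≥0∞) * (‖(Z j ω t).2‖₊ : ℝ≥0∞)) *
                ((‖K (M ω s - (Z j ω t).1) (t - τ)‖₊ : ℝ≥0∞) * (‖(Z j ω t).2‖₊ : ℝ≥0∞)) ∂P
                ≤ ∫⁻ ω, ENNReal.ofReal CK *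
                  ((‖K (M ω s - (Z j ω t).1) (t - τ)‖₊ : ℝ≥0∞) * (‖(Z j ω t).2‖₊ : ℝ≥0∞) ^ 2) ∂P :=
                  lintegral_mono hpt
              _ = ENNReal.ofReal CK * ∫⁻ ω,
                  (‖K (M ω s - (Z j ω t).1) (t - τ)‖₊ : ℝ≥0∞) * (‖(Z j ω t).2‖₊ : ℝ≥0∞) ^ 2 ∂P :=
                  lintegral_const_mul _ (((hfA s t).comp (hMmeas.prodMk (hZmeas j))).mul
                    (((hgBz t).comp (hZmeas j)).pow_const 2))
              _ ≤ ENNReal.ofReal CK * (Φ s t * (b2 + b1 * b1)) := by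
                  -- here we transfer j to 0 and use hii
                  have htr := aux_lintegral_transfer (hMmeas.prodMk (hZmeas j))
                    (hMmeas.prodMk (hZmeas 0)) (mapMZj j)
                    (f := fun q : (((Fin p → ℝ) → (Fin p → ℝ)) × (ℝ → (Fin p → ℝ) × ℝ)) =>
                      (‖K (q.1 s - (q.2 t).1) (t - τ)‖₊ : ℝ≥0∞) * ((‖(q.2 t).2‖₊ : ℝ≥0∞)) ^ 2)
                    ((hfA s t).mul (((hgBz t).comp measurable_snd).pow_const 2))
                  simp only at htr
                  rw [htr, hii s t]
                  exact mul_le_mul_right (mul_le_mul_right le_self_add _) _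
          · -- off-diagonal term
            have hpt : ∀ ω : Ω,
                ((‖K (M ω s - (Z j ω t).1) (t - τ)‖₊ : ℝ≥0∞) * (‖(Z j ω t).2‖₊ : ℝ≥0∞)) *
                ((‖K (M ω s - (Z k ω t).1) (t - τ)‖₊ : ℝ≥0∞) * (‖(Z k ω t).2‖₊ : ℝ≥0∞))
                ≤ ENNReal.ofReal CK *
                  (((‖K (M ω s - (Z j ω t).1) (t - τ)‖₊ : ℝ≥0∞) * (‖(Z j ω t).2‖₊ : ℝ≥0∞)) *
                    (‖(Z k ω t).2‖₊ : ℝ≥0∞)) := by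
              intro ω
              have : ((‖K (M ω s - (Z j ω t).1) (t - τ)‖₊ : ℝ≥0∞) * (‖(Z j ω t).2‖₊ : ℝ≥0∞)) *
                  ((‖K (M ω s - (Z k ω t).1) (t - τ)‖₊ : ℝ≥0∞) * (‖(Z k ω t).2‖₊ : ℝ≥0∞))
                  = (‖K (M ω s - (Z k ω t).1) (t - τ)‖₊ : ℝ≥0∞) *
                    (((‖K (M ω s - (Z j ω t).1) (t - τ)‖₊ : ℝ≥0∞) * (‖(Z j ω t).2‖₊ : ℝ≥0∞)) *
                      (‖(Z k ω t).2‖₊ : ℝ≥0∞)) := by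
                ring
              rw [this]
              exact mul_le_mul_left (hAle k ω) _
            calc ∫⁻ ω, ((‖K (M ω s - (Z j ω t).1) (t - τ)‖₊ : ℝ≥0∞) * (‖(Z j ω t).2‖₊ : ℝ≥0∞)) *
                ((‖K (M ω s - (Z k ω t).1) (t - τ)‖₊ : ℝ≥0∞) * (‖(Z k ω t).2‖₊ : ℝ≥0∞)) ∂P
                ≤ ∫⁻ ω, ENNReal.ofReal CK *
                  (((‖K (M ω s - (Z j ω t).1) (t - τ)‖₊ : ℝ≥0∞) * (‖(Z j ω t).2‖₊ : ℝ≥0∞)) *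
                    (‖(Z k ω t).2‖₊ : ℝ≥0∞)) ∂P := lintegral_mono hpt
              _ = ENNReal.ofReal CK * ∫⁻ ω,
                  ((‖K (M ω s - (Z j ω t).1) (t - τ)‖₊ : ℝ≥0∞) * (‖(Z j ω t).2‖₊ : ℝ≥0∞)) *
                    (‖(Z k ω t).2‖₊ : ℝ≥0∞) ∂P :=
                  lintegral_const_mul _ ((hABmeas s t j).mul ((hgBz t).comp (hZmeas k)))
              _ ≤ ENNReal.ofReal CK * (Φ s t * (b2 + b1 * b1)) := by
                  rw [hiii s t j k hjk]
                  rw [mul_assoc]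
                  exact mul_le_mul_right (mul_le_mul_right le_add_self _) _
        calc ∑ k ∈ Finset.range n, ∫⁻ ω,
              ((‖K (M ω s - (Z j ω t).1) (t - τ)‖₊ : ℝ≥0∞) * (‖(Z j ω t).2‖₊ : ℝ≥0∞)) *
              ((‖K (M ω s - (Z k ω t).1) (t - τ)‖₊ : ℝ≥0∞) * (‖(Z k ω t).2‖₊ : ℝ≥0∞)) ∂P
            ≤ ∑ _k ∈ Finset.range n, ENNReal.ofReal CK * (Φ s t * (b2 + b1 * b1)) :=
              Finset.sum_le_sum hone
          _ = n * (ENNReal.ofReal CK * (Φ s t * (b2 + b1 * b1))) := by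
              rw [Finset.sum_const, Finset.card_range, nsmul_eq_mul]
      calc ∑ j ∈ Finset.range n, ∫⁻ ω, ∑ k ∈ Finset.range n,
            ((‖K (M ω s - (Z j ω t).1) (t - τ)‖₊ : ℝ≥0∞) * (‖(Z j ω t).2‖₊ : ℝ≥0∞)) *
            ((‖K (M ω s - (Z k ω t).1) (t - τ)‖₊ : ℝ≥0∞) * (‖(Z k ω t).2‖₊ : ℝ≥0∞)) ∂P
          ≤ ∑ _j ∈ Finset.range n, (n : ℝ≥0∞) * (ENNReal.ofReal CK * (Φ s t * (b2 + b1 * b1))) :=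
            Finset.sum_le_sum hterm
        _ = (n : ℝ≥0∞) ^ 2 * (ENNReal.ofReal CK * (Φ s t * (b2 + b1 * b1))) := by
            rw [Finset.sum_const, Finset.card_range, nsmul_eq_mul, ← mul_assoc, sq]
    calc (∑' n : ℕ, ∫⁻ ω, (if N t ω = n then (1 : ℝ≥0∞) else 0) *
            (∑ j ∈ Finset.range n,
              (‖K (M ω s - (Z j ω t).1) (t - τ)‖₊ : ℝ≥0∞) * (‖(Z j ω t).2‖₊ : ℝ≥0∞)) ^ 2 ∂P)
        ≤ ∑' n : ℕ, poissonMeasure lam {n} *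
            ((n : ℝ≥0∞) ^ 2 * (ENNReal.ofReal CK * (Φ s t * (b2 + b1 * b1)))) :=
          ENNReal.tsum_le_tsum h1
      _ = m2 * (ENNReal.ofReal CK * (Φ s t * (b2 + b1 * b1))) := by
          simp_rw [← mul_assoc]
          rw [ENNReal.tsum_mul_right, ENNReal.tsum_mul_right, ENNReal.tsum_mul_right, hm2def]

  -- ## representation of Φ over a fixed law, and its vanishing at infinity
  have hMs : ∀ s : Fin p → ℝ, Measurable (fun ω => M ω s) :=
    fun s => (measurable_pi_apply s).comp hMmeas
  have hμ0t : ∀ t : ℝ, Measurable (fun ω => (Z 0 ω t).1) :=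
    fun t => measurable_fst.comp ((measurable_pi_apply t).comp (hZmeas 0))
  have hΦrepr : ∀ (s : Fin p → ℝ) (t : ℝ),
      Φ s t = ∫⁻ y : (Fin p → ℝ) × (Fin p → ℝ), (‖K (y.1 - y.2) (t - τ)‖₊ : ℝ≥0∞)
          ∂(P.map (fun ω => (M ω s, (Z 0 ω 0).1))) := by
    intro s t
    have hlaw : P.map (fun ω => (M ω s, (Z 0 ω t).1))
        = P.map (fun ω => (M ω s, (Z 0 ω 0).1)) := by
      have hI : ∀ u : ℝ, IndepFun (fun ω => M ω s) (fun ω => (Z 0 ω u).1) P := by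
        intro u
        exact (hMZf.comp measurable_id (measurable_pi_apply 0)).comp
          (measurable_pi_apply s) (measurable_fst.comp (measurable_pi_apply u))
      have h1 := (indepFun_iff_map_prod_eq_prod_map_map (hMs s).aemeasurable
        (hμ0t t).aemeasurable).1 (hI t)
      have h2 := (indepFun_iff_map_prod_eq_prod_map_map (hMs s).aemeasurable
        (hμ0t 0).aemeasurable).1 (hI 0)
      rw [h1, h2]
      congr 1
      have e1 : (fun ω => (Z 0 ω t).1)
          = (fun z : (Fin p → ℝ) × ℝ => z.1) ∘ (fun ω => Z 0 ω t) := rfl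
      have e2 : (fun ω => (Z 0 ω 0).1)
          = (fun z : (Fin p → ℝ) × ℝ => z.1) ∘ (fun ω => Z 0 ω 0) := rfl
      rw [e1, e2,
        ← Measure.map_map measurable_fst
          (show Measurable (fun ω => Z 0 ω t) from (measurable_pi_apply t).comp (hZmeas 0)),
        ← Measure.map_map measurable_fst
          (show Measurable (fun ω => Z 0 ω 0) from (measurable_pi_apply 0).comp (hZmeas 0)),
        hstat t 0]
    have hfy : Measurable (fun y : (Fin p → ℝ) × (Fin p → ℝ) =>
        (‖K (y.1 - y.2) (t - τ)‖₊ : ℝ≥0∞)) :=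
      ((hK1 t).comp (measurable_fst.sub measurable_snd)).nnnorm.coe_nnreal_ennreal
    rw [hΦdef, ← hlaw, lintegral_map hfy ((hMs s).prodMk (hμ0t t))]
  have hΦseq : ∀ (s : Fin p → ℝ) (u : ℕ → ℝ), Tendsto (fun n => |u n - τ|) atTop atTop →
      Tendsto (fun n => Φ s (u n)) atTop (nhds 0) := by
    intro s u hu
    have hrw : (fun n => Φ s (u n)) = fun n =>
        ∫⁻ y : (Fin p → ℝ) × (Fin p → ℝ), (‖K (y.1 - y.2) (u n - τ)‖₊ : ℝ≥0∞)
          ∂(P.map (fun ω => (M ω s, (Z 0 ω 0).1))) :=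
      funext (fun n => hΦrepr s (u n))
    rw [hrw]
    haveI : IsProbabilityMeasure (P.map (fun ω => (M ω s, (Z 0 ω 0).1))) :=
      Measure.isProbabilityMeasure_map ((hMs s).prodMk (hμ0t 0)).aemeasurable
    have hconv := tendsto_lintegral_of_dominated_convergence
      (μ := P.map (fun ω => (M ω s, (Z 0 ω 0).1)))
      (F := fun n (y : (Fin p → ℝ) × (Fin p → ℝ)) => (‖K (y.1 - y.2) (u n - τ)‖₊ : ℝ≥0∞))
      (f := fun _ => 0)
      (fun _ => ENNReal.ofReal CK)
      (fun n => ((hK1 (u n)).comp (measurable_fst.sub measurable_snd)).nnnorm.coe_nnreal_ennreal)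
      (fun n => ae_of_all _ (fun y => by
        show (‖K (y.1 - y.2) (u n - τ)‖₊ : ℝ≥0∞) ≤ ENNReal.ofReal CK
        rw [← enorm_eq_nnnorm, Real.enorm_eq_ofReal_abs]
        exact ENNReal.ofReal_le_ofReal (hKbdd _ _)))
      (by simp)
      (ae_of_all _ (fun y => by
        have h1 : Tendsto (fun n => u n - τ) atTop (comap (fun t : ℝ => |t|) atTop) := by
          rw [tendsto_comap_iff]
          exact hu
        have h2 : Tendsto (fun n => K (y.1 - y.2) (u n - τ)) atTop (nhds 0) :=
          (hK0 (y.1 - y.2)).comp h1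
        have h3 : Tendsto (fun n => ENNReal.ofReal |K (y.1 - y.2) (u n - τ)|) atTop (nhds 0) := by
          have h4 : Tendsto (fun n => |K (y.1 - y.2) (u n - τ)|) atTop (nhds 0) := by
            simpa [Function.comp_def] using ((continuous_abs.tendsto 0).comp h2)
          simpa [Function.comp_def] using (ENNReal.continuous_ofReal.tendsto 0).comp h4
        simpa [← enorm_eq_nnnorm, Real.enorm_eq_ofReal_abs] using h3))
    simpa using hconv
  have hΦsmall : ∀ (s : Fin p → ℝ) (ε : ℝ), 0 < ε →
      ∃ R : ℝ, ∀ t, R ≤ |t - τ| → (Φ s t).toReal < ε := by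
    intro s ε hε
    by_contra hcon
    push_neg at hcon
    choose u hu1 hu2 using fun n : ℕ => hcon n
    have hut : Tendsto (fun n : ℕ => |u n - τ|) atTop atTop :=
      tendsto_atTop_mono hu1 tendsto_natCast_atTop_atTop
    have h0 := hΦseq s u hut
    have h0' : Tendsto (fun n => (Φ s (u n)).toReal) atTop (nhds 0) := by
      have := (ENNReal.tendsto_toReal (a := 0) (by simp)).comp h0
      exact this
    have hle : ε ≤ 0 := ge_of_tendsto h0' (Eventually.of_forall hu2)
    linarith

  -- ## pointwise domination of the random field by the nonnegative envelope
  have hptw1 : ∀ (s : Fin p → ℝ) (t : ℝ) (ω : Ω),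
      (‖∑ j ∈ Finset.range (N t ω), K (M ω s - (Z j ω t).1) (t - τ) * (Z j ω t).2‖₊ : ℝ≥0∞)
        ≤ ∑ j ∈ Finset.range (N t ω),
            (‖K (M ω s - (Z j ω t).1) (t - τ)‖₊ : ℝ≥0∞) * (‖(Z j ω t).2‖₊ : ℝ≥0∞) := by
    intro s t ω
    calc (‖∑ j ∈ Finset.range (N t ω), K (M ω s - (Z j ω t).1) (t - τ) * (Z j ω t).2‖₊ : ℝ≥0∞)
        ≤ ∑ j ∈ Finset.range (N t ω),
            (‖K (M ω s - (Z j ω t).1) (t - τ) * (Z j ω t).2‖₊ : ℝ≥0∞) := by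
          rw [← ENNReal.coe_finset_sum]
          exact_mod_cast nnnorm_sum_le _ _
      _ = ∑ j ∈ Finset.range (N t ω),
            (‖K (M ω s - (Z j ω t).1) (t - τ)‖₊ : ℝ≥0∞) * (‖(Z j ω t).2‖₊ : ℝ≥0∞) := by
          refine Finset.sum_congr rfl (fun j _ => ?_)
          rw [nnnorm_mul, ENNReal.coe_mul]
  have hfieldmeas : ∀ (s : Fin p → ℝ) (t : ℝ), Measurable (fun ω =>
      ∑ j ∈ Finset.range (N t ω), K (M ω s - (Z j ω t).1) (t - τ) * (Z j ω t).2) := by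
    intro s t
    apply aux_measurable_sum (hNmeas t)
    intro j
    exact ((hK1 t).comp ((hMs s).sub
        (measurable_fst.comp ((measurable_pi_apply t).comp (hZmeas j))))).mul
      (measurable_snd.comp ((measurable_pi_apply t).comp (hZmeas j)))
  -- first-moment bound in real form
  set c1 : ℝ := m1.toReal * b1.toReal with hc1def
  set c2 : ℝ := m2.toReal * (CK * (b2 + b1 * b1).toReal) with hc2def
  have hTR2 : ∀ (s : Fin p → ℝ) (t : ℝ),
      (m1 * (Φ s t * b1)).toReal = c1 * (Φ s t).toReal := by
    intro s t
    rw [hc1def]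
    simp only [ENNReal.toReal_mul]
    ring
  have hTR1 : ∀ (s : Fin p → ℝ) (t : ℝ),
      (m2 * (ENNReal.ofReal CK * (Φ s t * (b2 + b1 * b1)))).toReal
        = c2 * (Φ s t).toReal := by
    intro s t
    rw [hc2def]
    simp only [ENNReal.toReal_mul, ENNReal.toReal_ofReal hCK.le]
    ring
  have hΦfin : ∀ (s : Fin p → ℝ) (t : ℝ), Φ s t ≠ ∞ :=
    fun s t => ((hΦle s t).trans_lt ENNReal.ofReal_lt_top).ne
  have hE2fin : ∀ (s : Fin p → ℝ) (t : ℝ),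
      m2 * (ENNReal.ofReal CK * (Φ s t * (b2 + b1 * b1))) ≠ ∞ := by
    intro s t
    apply ENNReal.mul_ne_top hm2fin
    apply ENNReal.mul_ne_top ENNReal.ofReal_ne_top
    exact ENNReal.mul_ne_top (hΦfin s t)
      (ENNReal.add_ne_top.2 ⟨hb2fin, ENNReal.mul_ne_top hb1fin hb1fin⟩)
  have hE1fin : ∀ (s : Fin p → ℝ) (t : ℝ), m1 * (Φ s t * b1) ≠ ∞ := by
    intro s t
    exact ENNReal.mul_ne_top hm1fin (ENNReal.mul_ne_top (hΦfin s t) hb1fin)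
  -- absolute value bound on each integral
  have habs1 : ∀ (s : Fin p → ℝ) (t : ℝ),
      ‖∫ ω, ∑ j ∈ Finset.range (N t ω), K (M ω s - (Z j ω t).1) (t - τ) * (Z j ω t).2 ∂P‖
        ≤ c1 * (Φ s t).toReal := by
    intro s t
    rw [← hTR2 s t]
    calc ‖∫ ω, ∑ j ∈ Finset.range (N t ω), K (M ω s - (Z j ω t).1) (t - τ) * (Z j ω t).2 ∂P‖
        ≤ (∫⁻ ω, ENNReal.ofReal
            ‖∑ j ∈ Finset.range (N t ω), K (M ω s - (Z j ω t).1) (t - τ) * (Z j ω t).2‖ ∂P).toReal :=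
          norm_integral_le_lintegral_norm _
      _ ≤ (m1 * (Φ s t * b1)).toReal := by
          apply ENNReal.toReal_mono (hE1fin s t)
          rw [← hF1 s t]
          apply lintegral_mono
          intro ω
          calc (ENNReal.ofReal
              ‖∑ j ∈ Finset.range (N t ω), K (M ω s - (Z j ω t).1) (t - τ) * (Z j ω t).2‖)
              = (‖∑ j ∈ Finset.range (N t ω),
                  K (M ω s - (Z j ω t).1) (t - τ) * (Z j ω t).2‖₊ : ℝ≥0∞) :=
                ofReal_norm _
            _ ≤ _ := hptw1 s t ω
  -- second moment bound
  have hsq : ∀ (s : Fin p → ℝ) (t : ℝ),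
      ∫⁻ ω, ((‖∑ j ∈ Finset.range (N t ω),
          K (M ω s - (Z j ω t).1) (t - τ) * (Z j ω t).2‖₊ : ℝ≥0∞)) ^ (2 : ℝ) ∂P
        ≤ m2 * (ENNReal.ofReal CK * (Φ s t * (b2 + b1 * b1))) := by
    intro s t
    have hcast : ∀ x : ℝ≥0∞, x ^ (2 : ℝ) = x ^ (2 : ℕ) := by
      intro x
      rw [show (2 : ℝ) = ((2 : ℕ) : ℝ) by norm_num, ENNReal.rpow_natCast]
    calc ∫⁻ ω, ((‖∑ j ∈ Finset.range (N t ω),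
            K (M ω s - (Z j ω t).1) (t - τ) * (Z j ω t).2‖₊ : ℝ≥0∞)) ^ (2 : ℝ) ∂P
        ≤ ∫⁻ ω, (∑ j ∈ Finset.range (N t ω),
            (‖K (M ω s - (Z j ω t).1) (t - τ)‖₊ : ℝ≥0∞) * (‖(Z j ω t).2‖₊ : ℝ≥0∞)) ^ 2 ∂P := by
          apply lintegral_mono
          intro ω
          calc (‖∑ j ∈ Finset.range (N t ω),
                K (M ω s - (Z j ω t).1) (t - τ) * (Z j ω t).2‖₊ : ℝ≥0∞) ^ (2 : ℝ)
              = (‖∑ j ∈ Finset.range (N t ω),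
                K (M ω s - (Z j ω t).1) (t - τ) * (Z j ω t).2‖₊ : ℝ≥0∞) ^ (2 : ℕ) := hcast _
            _ ≤ (∑ j ∈ Finset.range (N t ω),
                (‖K (M ω s - (Z j ω t).1) (t - τ)‖₊ : ℝ≥0∞) * (‖(Z j ω t).2‖₊ : ℝ≥0∞)) ^ (2 : ℕ) :=
              pow_le_pow_left' (hptw1 s t ω) 2
      _ ≤ m2 * (ENNReal.ofReal CK * (Φ s t * (b2 + b1 * b1))) := hF2 s t
  -- the product bound on the covariance
  have hbound : ∀ n : ℕ,
      ‖covar P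
        (fun ω => ∑ j ∈ Finset.range (N (t₁ n) ω),
          K (M ω s₁ - (Z j ω (t₁ n)).1) (t₁ n - τ) * (Z j ω (t₁ n)).2)
        (fun ω => ∑ j ∈ Finset.range (N (t₂ n) ω),
          K (M ω s₂ - (Z j ω (t₂ n)).1) (t₂ n - τ) * (Z j ω (t₂ n)).2)‖
      ≤ Real.sqrt (c2 ^ 2 * ((Φ s₁ (t₁ n)).toReal * (Φ s₂ (t₂ n)).toReal))
          + c1 ^ 2 * ((Φ s₁ (t₁ n)).toReal * (Φ s₂ (t₂ n)).toReal) := by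
    intro n
    have hc1n : 0 ≤ c1 := by rw [hc1def]; positivity
    have hc2n : 0 ≤ c2 := by
      rw [hc2def]
      exact mul_nonneg ENNReal.toReal_nonneg (mul_nonneg hCK.le ENNReal.toReal_nonneg)
    have hq2 : (2 : ℝ).HolderConjugate 2 := Real.HolderConjugate.two_two
    have hm1' : Measurable (fun ω => ((‖∑ j ∈ Finset.range (N (t₁ n) ω),
        K (M ω s₁ - (Z j ω (t₁ n)).1) (t₁ n - τ) * (Z j ω (t₁ n)).2‖₊ : ℝ≥0∞))) :=
      (hfieldmeas s₁ (t₁ n)).nnnorm.coe_nnreal_ennreal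
    have hm2' : Measurable (fun ω => ((‖∑ j ∈ Finset.range (N (t₂ n) ω),
        K (M ω s₂ - (Z j ω (t₂ n)).1) (t₂ n - τ) * (Z j ω (t₂ n)).2‖₊ : ℝ≥0∞))) :=
      (hfieldmeas s₂ (t₂ n)).nnnorm.coe_nnreal_ennreal
    have hfinE1 : (m2 * (ENNReal.ofReal CK * (Φ s₁ (t₁ n) * (b2 + b1 * b1)))) ^ (1/2 : ℝ)
        * (m2 * (ENNReal.ofReal CK * (Φ s₂ (t₂ n) * (b2 + b1 * b1)))) ^ (1/2 : ℝ) ≠ ∞ :=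
      ENNReal.mul_ne_top
        (ENNReal.rpow_ne_top_of_nonneg (by norm_num) (hE2fin s₁ (t₁ n)))
        (ENNReal.rpow_ne_top_of_nonneg (by norm_num) (hE2fin s₂ (t₂ n)))
    have hh : ∫⁻ ω, ENNReal.ofReal ‖(∑ j ∈ Finset.range (N (t₁ n) ω),
          K (M ω s₁ - (Z j ω (t₁ n)).1) (t₁ n - τ) * (Z j ω (t₁ n)).2) *
        (∑ j ∈ Finset.range (N (t₂ n) ω),
          K (M ω s₂ - (Z j ω (t₂ n)).1) (t₂ n - τ) * (Z j ω (t₂ n)).2)‖ ∂P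
        ≤ (m2 * (ENNReal.ofReal CK * (Φ s₁ (t₁ n) * (b2 + b1 * b1)))) ^ (1/2 : ℝ)
          * (m2 * (ENNReal.ofReal CK * (Φ s₂ (t₂ n) * (b2 + b1 * b1)))) ^ (1/2 : ℝ) := by
      have hmul : ∀ ω : Ω, ENNReal.ofReal ‖(∑ j ∈ Finset.range (N (t₁ n) ω),
            K (M ω s₁ - (Z j ω (t₁ n)).1) (t₁ n - τ) * (Z j ω (t₁ n)).2) *
          (∑ j ∈ Finset.range (N (t₂ n) ω),
            K (M ω s₂ - (Z j ω (t₂ n)).1) (t₂ n - τ) * (Z j ω (t₂ n)).2)‖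
          = ((‖∑ j ∈ Finset.range (N (t₁ n) ω),
              K (M ω s₁ - (Z j ω (t₁ n)).1) (t₁ n - τ) * (Z j ω (t₁ n)).2‖₊ : ℝ≥0∞)) *
            ((‖∑ j ∈ Finset.range (N (t₂ n) ω),
              K (M ω s₂ - (Z j ω (t₂ n)).1) (t₂ n - τ) * (Z j ω (t₂ n)).2‖₊ : ℝ≥0∞)) := by
        intro ω
        rw [ofReal_norm, enorm_eq_nnnorm, nnnorm_mul, ENNReal.coe_mul]
      rw [lintegral_congr hmul]
      have hHolder := ENNReal.lintegral_mul_le_Lp_mul_Lq P hq2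
        (f := fun ω => ((‖∑ j ∈ Finset.range (N (t₁ n) ω),
            K (M ω s₁ - (Z j ω (t₁ n)).1) (t₁ n - τ) * (Z j ω (t₁ n)).2‖₊ : ℝ≥0∞)))
        (g := fun ω => ((‖∑ j ∈ Finset.range (N (t₂ n) ω),
            K (M ω s₂ - (Z j ω (t₂ n)).1) (t₂ n - τ) * (Z j ω (t₂ n)).2‖₊ : ℝ≥0∞)))
        hm1'.aemeasurable hm2'.aemeasurable
      simp only [Pi.mul_apply] at hHolder
      refine le_trans hHolder ?_
      have e2 : (1 : ℝ) / 2 = 1/2 := rfl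
      exact mul_le_mul'
        (ENNReal.rpow_le_rpow (hsq s₁ (t₁ n)) (by norm_num))
        (ENNReal.rpow_le_rpow (hsq s₂ (t₂ n)) (by norm_num))
    have habs12 : ‖∫ ω, (∑ j ∈ Finset.range (N (t₁ n) ω),
          K (M ω s₁ - (Z j ω (t₁ n)).1) (t₁ n - τ) * (Z j ω (t₁ n)).2) *
        (∑ j ∈ Finset.range (N (t₂ n) ω),
          K (M ω s₂ - (Z j ω (t₂ n)).1) (t₂ n - τ) * (Z j ω (t₂ n)).2) ∂P‖
        ≤ Real.sqrt (c2 * (Φ s₁ (t₁ n)).toReal) * Real.sqrt (c2 * (Φ s₂ (t₂ n)).toReal) := by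
      calc ‖∫ ω, (∑ j ∈ Finset.range (N (t₁ n) ω),
            K (M ω s₁ - (Z j ω (t₁ n)).1) (t₁ n - τ) * (Z j ω (t₁ n)).2) *
          (∑ j ∈ Finset.range (N (t₂ n) ω),
            K (M ω s₂ - (Z j ω (t₂ n)).1) (t₂ n - τ) * (Z j ω (t₂ n)).2) ∂P‖
          ≤ (∫⁻ ω, ENNReal.ofReal ‖(∑ j ∈ Finset.range (N (t₁ n) ω),
              K (M ω s₁ - (Z j ω (t₁ n)).1) (t₁ n - τ) * (Z j ω (t₁ n)).2) *
            (∑ j ∈ Finset.range (N (t₂ n) ω),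
              K (M ω s₂ - (Z j ω (t₂ n)).1) (t₂ n - τ) * (Z j ω (t₂ n)).2)‖ ∂P).toReal :=
            norm_integral_le_lintegral_norm _
        _ ≤ ((m2 * (ENNReal.ofReal CK * (Φ s₁ (t₁ n) * (b2 + b1 * b1)))) ^ (1/2 : ℝ)
            * (m2 * (ENNReal.ofReal CK * (Φ s₂ (t₂ n) * (b2 + b1 * b1)))) ^ (1/2 : ℝ)).toReal :=
            ENNReal.toReal_mono hfinE1 hh
        _ = Real.sqrt (c2 * (Φ s₁ (t₁ n)).toReal) * Real.sqrt (c2 * (Φ s₂ (t₂ n)).toReal) := by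
            rw [ENNReal.toReal_mul, ← ENNReal.toReal_rpow, ← ENNReal.toReal_rpow,
              hTR1 s₁ (t₁ n), hTR1 s₂ (t₂ n), Real.sqrt_eq_rpow, Real.sqrt_eq_rpow]
    rw [covar]
    calc ‖(∫ ω, (∑ j ∈ Finset.range (N (t₁ n) ω),
            K (M ω s₁ - (Z j ω (t₁ n)).1) (t₁ n - τ) * (Z j ω (t₁ n)).2) *
          (∑ j ∈ Finset.range (N (t₂ n) ω),
            K (M ω s₂ - (Z j ω (t₂ n)).1) (t₂ n - τ) * (Z j ω (t₂ n)).2) ∂P)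
        - (∫ ω, ∑ j ∈ Finset.range (N (t₁ n) ω),
            K (M ω s₁ - (Z j ω (t₁ n)).1) (t₁ n - τ) * (Z j ω (t₁ n)).2 ∂P)
          * ∫ ω, ∑ j ∈ Finset.range (N (t₂ n) ω),
            K (M ω s₂ - (Z j ω (t₂ n)).1) (t₂ n - τ) * (Z j ω (t₂ n)).2 ∂P‖
        ≤ ‖∫ ω, (∑ j ∈ Finset.range (N (t₁ n) ω),
            K (M ω s₁ - (Z j ω (t₁ n)).1) (t₁ n - τ) * (Z j ω (t₁ n)).2) *
          (∑ j ∈ Finset.range (N (t₂ n) ω),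
            K (M ω s₂ - (Z j ω (t₂ n)).1) (t₂ n - τ) * (Z j ω (t₂ n)).2) ∂P‖
          + ‖(∫ ω, ∑ j ∈ Finset.range (N (t₁ n) ω),
            K (M ω s₁ - (Z j ω (t₁ n)).1) (t₁ n - τ) * (Z j ω (t₁ n)).2 ∂P)
          * ∫ ω, ∑ j ∈ Finset.range (N (t₂ n) ω),
            K (M ω s₂ - (Z j ω (t₂ n)).1) (t₂ n - τ) * (Z j ω (t₂ n)).2 ∂P‖ :=
          norm_sub_le _ _
      _ ≤ Real.sqrt (c2 * (Φ s₁ (t₁ n)).toReal) * Real.sqrt (c2 * (Φ s₂ (t₂ n)).toReal)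
          + (c1 * (Φ s₁ (t₁ n)).toReal) * (c1 * (Φ s₂ (t₂ n)).toReal) := by
          apply add_le_add habs12
          rw [norm_mul]
          exact mul_le_mul (habs1 s₁ (t₁ n)) (habs1 s₂ (t₂ n)) (norm_nonneg _)
            (mul_nonneg hc1n ENNReal.toReal_nonneg)
      _ = Real.sqrt (c2 ^ 2 * ((Φ s₁ (t₁ n)).toReal * (Φ s₂ (t₂ n)).toReal))
          + c1 ^ 2 * ((Φ s₁ (t₁ n)).toReal * (Φ s₂ (t₂ n)).toReal) := by
          rw [← Real.sqrt_mul (mul_nonneg hc2n ENNReal.toReal_nonneg),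
            show (c2 * (Φ s₁ (t₁ n)).toReal) * (c2 * (Φ s₂ (t₂ n)).toReal)
              = c2 ^ 2 * ((Φ s₁ (t₁ n)).toReal * (Φ s₂ (t₂ n)).toReal) from by ring]
          ring
  -- the limit of the bound
  have hprod : Tendsto (fun n => (Φ s₁ (t₁ n)).toReal * (Φ s₂ (t₂ n)).toReal)
      atTop (nhds 0) := by
    rw [Metric.tendsto_atTop]
    intro ε hε
    have hCK1 : (0 : ℝ) < CK + 1 := by linarith
    obtain ⟨R₁, hR₁⟩ := hΦsmall s₁ (ε / (CK + 1)) (by positivity)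
    obtain ⟨R₂, hR₂⟩ := hΦsmall s₂ (ε / (CK + 1)) (by positivity)
    obtain ⟨Nn, hNn⟩ := eventually_atTop.1 (hlag.eventually_ge_atTop (|R₁| + |R₂|))
    refine ⟨Nn, fun n hn => ?_⟩
    have hlagn := hNn n hn
    have htri : |t₁ n - t₂ n| ≤ |t₁ n - τ| + |t₂ n - τ| := by
      calc |t₁ n - t₂ n| ≤ |t₁ n - τ| + |τ - t₂ n| := abs_sub_le _ _ _
        _ = |t₁ n - τ| + |t₂ n - τ| := by rw [abs_sub_comm τ (t₂ n)]
    have h0a : 0 ≤ (Φ s₁ (t₁ n)).toReal := ENNReal.toReal_nonneg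
    have h0b : 0 ≤ (Φ s₂ (t₂ n)).toReal := ENNReal.toReal_nonneg
    have hCKa : (Φ s₁ (t₁ n)).toReal ≤ CK := by
      have := ENNReal.toReal_mono ENNReal.ofReal_ne_top (hΦle s₁ (t₁ n))
      rwa [ENNReal.toReal_ofReal hCK.le] at this
    have hCKb : (Φ s₂ (t₂ n)).toReal ≤ CK := by
      have := ENNReal.toReal_mono ENNReal.ofReal_ne_top (hΦle s₂ (t₂ n))
      rwa [ENNReal.toReal_ofReal hCK.le] at this
    have hcase : R₁ ≤ |t₁ n - τ| ∨ R₂ ≤ |t₂ n - τ| := by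
      by_contra hc
      push_neg at hc
      have h1 : |t₁ n - τ| + |t₂ n - τ| < |R₁| + |R₂| :=
        add_lt_add (lt_of_lt_of_le hc.1 (le_abs_self R₁)) (lt_of_lt_of_le hc.2 (le_abs_self R₂))
      linarith
    rw [dist_zero_right, Real.norm_eq_abs, abs_of_nonneg (mul_nonneg h0a h0b)]
    rcases hcase with hca | hcb
    · have hsm := hR₁ (t₁ n) hca
      calc (Φ s₁ (t₁ n)).toReal * (Φ s₂ (t₂ n)).toReal
          ≤ (Φ s₁ (t₁ n)).toReal * (CK + 1) := by
            apply mul_le_mul_of_nonneg_left (by linarith) h0a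
        _ < (ε / (CK + 1)) * (CK + 1) := by
            apply mul_lt_mul_of_pos_right hsm hCK1
        _ = ε := div_mul_cancel₀ ε (by linarith)
    · have hsm := hR₂ (t₂ n) hcb
      calc (Φ s₁ (t₁ n)).toReal * (Φ s₂ (t₂ n)).toReal
          ≤ (CK + 1) * (Φ s₂ (t₂ n)).toReal := by
            apply mul_le_mul_of_nonneg_right (by linarith) h0b
        _ < (CK + 1) * (ε / (CK + 1)) := by
            apply mul_lt_mul_of_pos_left hsm hCK1
        _ = ε := by field_simp
  have hgt : Tendsto (fun n =>
      Real.sqrt (c2 ^ 2 * ((Φ s₁ (t₁ n)).toReal * (Φ s₂ (t₂ n)).toReal))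
        + c1 ^ 2 * ((Φ s₁ (t₁ n)).toReal * (Φ s₂ (t₂ n)).toReal)) atTop (nhds 0) := by
    have hg : Continuous (fun x : ℝ => Real.sqrt (c2 ^ 2 * x) + c1 ^ 2 * x) := by
      exact (Real.continuous_sqrt.comp (continuous_const.mul continuous_id)).add
        (continuous_const.mul continuous_id)
    have := (hg.tendsto 0).comp hprod
    simpa [Function.comp_def] using this
  exact squeeze_zero_norm hbound hgt
end

section
/- Suppose that for every t ∈ ℝ, K(x, t) → 0 as ‖x‖ → ∞, and that M acts componentwise, M(ω, s) = (M₁(ω, s⁽¹⁾), …, M_p(ω, s⁽ᵖ⁾)), where for almost every ω each M_ℓ(ω, ·) : ℝ → ℝ is nondecreasing and M_ℓ(ω, x) → +∞ as x → +∞. Then for all fixed t₁, t₂ ∈ ℝ, every fixed s₂ ∈ ℝ^p, and every sequence (s₁(n))_{n∈ℕ} in ℝ^p for which at least one coordinate s₁(n)⁽ˡ⁾ tends to +∞, one has Cov(f(s₁(n), t₁), f(s₂, t₂)) → 0 as n → ∞. -/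
open MeasureTheory ProbabilityTheory Filter

open MeasureTheory ProbabilityTheory Filter
open scoped ENNReal NNReal

lemma measurable_randSum {Ω : Type*} [MeasurableSpace Ω] (N : Ω → ℕ) (hN : Measurable N)
    (f : ℕ → Ω → ℝ) (hf : ∀ j, Measurable (f j)) :
    Measurable fun ω => ∑ j ∈ Finset.range (N ω), f j ω := by
  have h : Measurable fun q : Ω × ℕ => ∑ j ∈ Finset.range q.2, f j q.1 :=
    measurable_from_prod_countable_left fun n => by
      simpa using Finset.measurable_sum (Finset.range n) (fun j _ => hf j)
  exact h.comp (measurable_id.prodMk hN)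

lemma nat_sq_le_two_pow {n : ℕ} (hn : 4 ≤ n) : n ^ 2 ≤ 2 ^ n := by
  induction n, hn using Nat.le_induction with
  | base => norm_num
  | succ m hm ih =>
    have h2 : 2 ^ (m + 1) = 2 ^ m * 2 := pow_succ 2 m
    nlinarith [ih, hm]

lemma poisson_sq_moment (lam : NNReal) :
    (∑' n : ℕ, poissonMeasure lam {n} * (n : ℝ≥0∞) ^ 2) ≠ ⊤ := by
  have hsing : ∀ n : ℕ, poissonMeasure lam {n}
      = ENNReal.ofReal (poissonPMFReal lam n) := by
    intro n
    rw [poissonMeasure_singleton]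
    rfl
  have hterm : ∀ n : ℕ, poissonMeasure lam {n} * (n : ℝ≥0∞) ^ 2
      = ENNReal.ofReal (poissonPMFReal lam n * (n : ℝ) ^ 2) := by
    intro n
    rw [hsing n, ENNReal.ofReal_mul ProbabilityTheory.poissonPMFReal_nonneg,
      ENNReal.ofReal_pow (Nat.cast_nonneg n), ENNReal.ofReal_natCast]
  have hsummable : Summable (fun n : ℕ => poissonPMFReal lam n * (n : ℝ) ^ 2) := by
    have hmaj : Summable (fun n : ℕ => Real.exp (-(lam : ℝ)) * ((2 * (lam : ℝ)) ^ n / n.factorial)) :=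
      (Real.summable_pow_div_factorial (2 * (lam : ℝ))).mul_left _
    refine hmaj.of_norm_bounded_eventually_nat ?_
    filter_upwards [eventually_ge_atTop 4] with n hn
    have h1 : (n : ℝ) ^ 2 ≤ 2 ^ n := by
      calc ((n : ℝ)) ^ 2 = ((n ^ 2 : ℕ) : ℝ) := by push_cast; ring
        _ ≤ ((2 ^ n : ℕ) : ℝ) := Nat.cast_le.mpr (nat_sq_le_two_pow hn)
        _ = 2 ^ n := by push_cast; ring
    have h0 : (0 : ℝ) ≤ poissonPMFReal lam n * (n : ℝ) ^ 2 :=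
      mul_nonneg ProbabilityTheory.poissonPMFReal_nonneg (by positivity)
    rw [Real.norm_of_nonneg h0]
    unfold poissonPMFReal
    have hfac : (0 : ℝ) < n.factorial := by positivity
    rw [mul_pow]
    have : Real.exp (-(lam : ℝ)) * (lam : ℝ) ^ n / n.factorial * (n : ℝ) ^ 2
        ≤ Real.exp (-(lam : ℝ)) * (lam : ℝ) ^ n / n.factorial * 2 ^ n := by
      apply mul_le_mul_of_nonneg_left h1
      positivity
    calc Real.exp (-(lam : ℝ)) * (lam : ℝ) ^ n / n.factorial * (n : ℝ) ^ 2
        ≤ Real.exp (-(lam : ℝ)) * (lam : ℝ) ^ n / n.factorial * 2 ^ n := this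
      _ = Real.exp (-(lam : ℝ)) * (2 ^ n * (lam : ℝ) ^ n / n.factorial) := by ring
  simp_rw [hterm]
  rw [← ENNReal.ofReal_tsum_of_nonneg
    (fun n => mul_nonneg ProbabilityTheory.poissonPMFReal_nonneg (by positivity)) hsummable]
  exact ENNReal.ofReal_ne_top
lemma memℒp_two_randSum {Ω : Type*} [MeasurableSpace Ω] (P : Measure Ω) [IsProbabilityMeasure P]
    (N : Ω → ℕ) (hN : Measurable N)
    (b : ℕ → Ω → ℝ) (hb : ∀ j, Measurable (b j))
    (B : ℝ≥0∞) (hB : B ≠ ⊤)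
    (hb2 : ∀ j, ∫⁻ ω, ((‖b j ω‖₊ : ℝ≥0∞)) ^ 2 ∂P ≤ B)
    (hindep : ∀ n : ℕ, IndepFun (fun ω => if N ω = n then (1 : ℝ≥0∞) else 0)
        (fun ω => (∑ j ∈ Finset.range n, (‖b j ω‖₊ : ℝ≥0∞)) ^ 2) P)
    (hNmom : (∑' n : ℕ, P {ω | N ω = n} * (n : ℝ≥0∞) ^ 2) ≠ ⊤) :
    MemLp (fun ω => ∑ j ∈ Finset.range (N ω), b j ω) 2 P := by
  have hmeas : Measurable fun ω => ∑ j ∈ Finset.range (N ω), b j ω :=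
    measurable_randSum N hN b hb
  set a : ℕ → Ω → ℝ≥0∞ := fun j ω => (‖b j ω‖₊ : ℝ≥0∞) with ha
  have hameas : ∀ j, Measurable (a j) := fun j => (hb j).nnnorm.coe_nnreal_ennreal
  set W : ℕ → Ω → ℝ≥0∞ := fun n ω => ∑ j ∈ Finset.range n, a j ω with hW
  have hWmeas : ∀ n, Measurable (W n) := fun n =>
    Finset.measurable_sum _ (fun j _ => hameas j)
  -- bound each ∫⁻ (W n)^2
  have hWsq : ∀ n, ∫⁻ ω, (W n ω) ^ 2 ∂P ≤ 2 * (n : ℝ≥0∞) ^ 2 * B := by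
    intro n
    have pt : ∀ ω, (W n ω) ^ 2
        ≤ ∑ j ∈ Finset.range n, ∑ k ∈ Finset.range n, ((a j ω) ^ 2 + (a k ω) ^ 2) := by
      intro ω
      have : (W n ω) ^ 2 = ∑ j ∈ Finset.range n, ∑ k ∈ Finset.range n, a j ω * a k ω := by
        rw [sq, Finset.sum_mul_sum]
      rw [this]
      refine Finset.sum_le_sum fun j _ => Finset.sum_le_sum fun k _ => ?_
      rcases le_total (a j ω) (a k ω) with h | h
      · calc a j ω * a k ω ≤ a k ω * a k ω := mul_le_mul_left h _
          _ = (a k ω) ^ 2 := (sq _).symm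
          _ ≤ (a j ω) ^ 2 + (a k ω) ^ 2 := self_le_add_left _ _
      · calc a j ω * a k ω ≤ a j ω * a j ω := mul_le_mul_right h _
          _ = (a j ω) ^ 2 := (sq _).symm
          _ ≤ (a j ω) ^ 2 + (a k ω) ^ 2 := self_le_add_right _ _
    calc ∫⁻ ω, (W n ω) ^ 2 ∂P
        ≤ ∫⁻ ω, ∑ j ∈ Finset.range n, ∑ k ∈ Finset.range n, ((a j ω) ^ 2 + (a k ω) ^ 2) ∂P :=
          lintegral_mono pt
      _ = ∑ j ∈ Finset.range n, ∫⁻ ω, ∑ k ∈ Finset.range n, ((a j ω) ^ 2 + (a k ω) ^ 2) ∂P := by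
          rw [lintegral_finset_sum]
          exact fun j _ => Finset.measurable_sum _ fun k _ =>
            ((hameas j).pow_const 2).add ((hameas k).pow_const 2)
      _ = ∑ j ∈ Finset.range n, ∑ k ∈ Finset.range n,
            (∫⁻ ω, (a j ω) ^ 2 ∂P + ∫⁻ ω, (a k ω) ^ 2 ∂P) := by
          refine Finset.sum_congr rfl fun j _ => ?_
          rw [lintegral_finset_sum]
          · exact Finset.sum_congr rfl fun k _ =>
              lintegral_add_left ((hameas j).pow_const 2) _
          · exact fun k _ => ((hameas j).pow_const 2).add ((hameas k).pow_const 2)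
      _ ≤ ∑ j ∈ Finset.range n, ∑ k ∈ Finset.range n, (B + B) := by
          exact Finset.sum_le_sum fun j _ => Finset.sum_le_sum fun k _ =>
            add_le_add (hb2 j) (hb2 k)
      _ = 2 * (n : ℝ≥0∞) ^ 2 * B := by
          simp [Finset.sum_const, two_mul]
          ring
  -- now the main computation
  rw [memLp_two_iff_integrable_sq hmeas.aestronglyMeasurable]
  refine ⟨(hmeas.pow_const 2).aestronglyMeasurable, ?_⟩
  rw [hasFiniteIntegral_def]
  have step1 : ∀ ω, (‖(∑ j ∈ Finset.range (N ω), b j ω) ^ 2‖₊ : ℝ≥0∞) ≤ (W (N ω) ω) ^ 2 := by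
    intro ω
    have h1 : (‖(∑ j ∈ Finset.range (N ω), b j ω) ^ 2‖₊ : ℝ≥0∞)
        = (‖∑ j ∈ Finset.range (N ω), b j ω‖₊ : ℝ≥0∞) ^ 2 := by
      rw [nnnorm_pow]; push_cast; ring
    rw [h1]
    have h2 : (‖∑ j ∈ Finset.range (N ω), b j ω‖₊ : ℝ≥0∞) ≤ W (N ω) ω := by
      calc (‖∑ j ∈ Finset.range (N ω), b j ω‖₊ : ℝ≥0∞)
          ≤ ((∑ j ∈ Finset.range (N ω), ‖b j ω‖₊ : ℝ≥0) : ℝ≥0∞) :=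
            ENNReal.coe_le_coe.mpr (nnnorm_sum_le _ _)
        _ = W (N ω) ω := by push_cast; rfl
    exact pow_le_pow_left' h2 2
  have step2 : ∀ ω, (W (N ω) ω) ^ 2
      = ∑' n : ℕ, (if N ω = n then (1 : ℝ≥0∞) else 0) * (W n ω) ^ 2 := by
    intro ω
    rw [tsum_eq_single (N ω) (fun m hm => by simp [Ne.symm hm])]
    simp
  calc ∫⁻ ω, (‖(∑ j ∈ Finset.range (N ω), b j ω) ^ 2‖₊ : ℝ≥0∞) ∂P
      ≤ ∫⁻ ω, (W (N ω) ω) ^ 2 ∂P := lintegral_mono step1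
    _ = ∫⁻ ω, ∑' n : ℕ, (if N ω = n then (1 : ℝ≥0∞) else 0) * (W n ω) ^ 2 ∂P := by
        exact lintegral_congr step2
    _ = ∑' n : ℕ, ∫⁻ ω, (if N ω = n then (1 : ℝ≥0∞) else 0) * (W n ω) ^ 2 ∂P := by
        refine lintegral_tsum fun n => ?_
        exact (Measurable.aemeasurable
          (((measurable_const.ite (hN (measurableSet_singleton n)) measurable_const)).mul
            ((hWmeas n).pow_const 2)))
    _ = ∑' n : ℕ, (∫⁻ ω, (if N ω = n then (1 : ℝ≥0∞) else 0) ∂P) * ∫⁻ ω, (W n ω) ^ 2 ∂P := by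
        refine tsum_congr fun n => ?_
        exact lintegral_mul_eq_lintegral_mul_lintegral_of_indepFun''
          (Measurable.aemeasurable
            (measurable_const.ite (hN (measurableSet_singleton n)) measurable_const))
          ((hWmeas n).pow_const 2).aemeasurable (hindep n)
    _ = ∑' n : ℕ, P {ω | N ω = n} * ∫⁻ ω, (W n ω) ^ 2 ∂P := by
        refine tsum_congr fun n => ?_
        congr 1
        have heq : (fun ω => if N ω = n then (1 : ℝ≥0∞) else 0)
            = Set.indicator {ω | N ω = n} 1 := by
          ext ω; simp [Set.indicator_apply]
        rw [heq]
        exact lintegral_indicator_one (hN (measurableSet_singleton n))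
    _ ≤ ∑' n : ℕ, P {ω | N ω = n} * (2 * (n : ℝ≥0∞) ^ 2 * B) :=
        ENNReal.tsum_le_tsum fun n => mul_le_mul_right (hWsq n) _
    _ = 2 * B * ∑' n : ℕ, P {ω | N ω = n} * (n : ℝ≥0∞) ^ 2 := by
        rw [← ENNReal.tsum_mul_left]
        exact tsum_congr fun n => by ring
    _ < ⊤ := ENNReal.mul_lt_top (ENNReal.mul_lt_top (by norm_num) hB.lt_top)
        hNmom.lt_top

/-- **Lévy-dynamic process: lagged covariances vanish as a spatial coordinate tends to
infinity.** Suppose `K (x, t) → 0` as `‖x‖ → ∞` for every `t`, and that `M` acts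
componentwise via almost surely nondecreasing maps `Mℓ (ω, ℓ, ·)` tending to `+∞`.
Then for fixed times `t₁, t₂`, a fixed spatial point `s₂`, and a sequence `s₁ n` in which
at least one coordinate tends to `+∞`, one has `Cov (f (s₁ n, t₁), f (s₂, t₂)) → 0`,
where `f (s, t) = ∑_{j < N_t} K (M s - μ_{j,t}, t - τ) β_{j,t}`. -/
theorem levyDynamic_cov_tendsto_zero_of_space_lag
    {Ω : Type*} [MeasurableSpace Ω] (P : Measure Ω) [IsProbabilityMeasure P]
    (p : ℕ) (hp : 1 ≤ p)
    (lam : NNReal) (hlam : 0 < lam) (τ : ℝ) (CK : ℝ) (hCK : 0 < CK)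
    -- the Poisson counts
    (N : ℝ → Ω → ℕ) (hNmeas : ∀ t, Measurable (N t))
    (hNpois : ∀ t, P.map (N t) = poissonMeasure lam)
    (hNindep : iIndepFun (fun t : ℝ => N t) P)
    -- the i.i.d. copies (over j) of the (ℝ^p × ℝ)-valued process (μ_{j,·}, β_{j,·})
    (Z : ℕ → Ω → ℝ → (Fin p → ℝ) × ℝ) (hZmeas : ∀ j, Measurable (Z j))
    (hZindep : iIndepFun Z P)
    (hZident : ∀ j, P.map (Z j) = P.map (Z 0))
    -- the family (Z j)_j is independent of the family (N t)_t
    (hNZ : IndepFun (fun ω => fun t => N t ω) (fun ω => fun j => Z j ω) P)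
    -- for each j, the β-process is independent of the μ-process
    (hβμ : ∀ j, IndepFun (fun ω => fun t => (Z j ω t).2) (fun ω => fun t => (Z j ω t).1) P)
    -- the law of the pair (μ_{0,t}, β_{0,t}) does not depend on t
    (hstat : ∀ t₁ t₂ : ℝ,
      P.map (fun ω => Z 0 ω t₁) = P.map (fun ω => Z 0 ω t₂))
    -- β_{0,t} is square integrable
    (hβsq : ∀ t : ℝ, MemLp (fun ω => (Z 0 ω t).2) 2 P)
    -- the autocovariance of β depends only on the lag and vanishes at infinity
    (Cβ : ℝ → ℝ)
    (hCβ : ∀ t₁ t₂ : ℝ,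
      covar P (fun ω => (Z 0 ω t₁).2) (fun ω => (Z 0 ω t₂).2) = Cβ |t₁ - t₂|)
    (hCβ0 : Tendsto Cβ atTop (nhds 0))
    -- the random map M, independent of all of the above
    (M : Ω → (Fin p → ℝ) → (Fin p → ℝ)) (hMmeas : Measurable M)
    (hMindep : IndepFun M
      (fun ω => ((fun t => N t ω), fun j => Z j ω)) P)
    -- M acts componentwise via Mℓ
    (Mℓ : Ω → Fin p → ℝ → ℝ)
    (hMcomp : ∀ ω s ℓ, M ω s ℓ = Mℓ ω ℓ (s ℓ))
    -- almost surely, each component is nondecreasing and tends to +∞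
    (hMmono : ∀ᵐ ω ∂P, ∀ ℓ : Fin p,
      Monotone (Mℓ ω ℓ) ∧ Tendsto (Mℓ ω ℓ) atTop atTop)
    -- the kernel K, measurable, uniformly bounded by CK
    (K : (Fin p → ℝ) → ℝ → ℝ) (hKmeas : Measurable (Function.uncurry K))
    (hKbdd : ∀ x t, |K x t| ≤ CK)
    -- the hypothesis: K (x, t) → 0 as ‖x‖ → ∞, for every t
    (hK0 : ∀ t : ℝ, Tendsto (fun x => K x t)
      (Filter.comap (fun x : Fin p → ℝ => ‖x‖) atTop) (nhds 0))
    -- the conclusion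
    (t₁ t₂ : ℝ) (s₂ : Fin p → ℝ) (s₁ : ℕ → Fin p → ℝ)
    (hcoord : ∃ ℓ : Fin p, Tendsto (fun n => s₁ n ℓ) atTop atTop) :
    Tendsto (fun n =>
      covar P
        (fun ω => ∑ j ∈ Finset.range (N t₁ ω),
          K (M ω (s₁ n) - (Z j ω t₁).1) (t₁ - τ) * (Z j ω t₁).2)
        (fun ω => ∑ j ∈ Finset.range (N t₂ ω),
          K (M ω s₂ - (Z j ω t₂).1) (t₂ - τ) * (Z j ω t₂).2))
      atTop (nhds 0) := by
  classical
  -- measurability of evaluated processes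
  have hβmeas : ∀ (j : ℕ) (t : ℝ), Measurable fun ω => (Z j ω t).2 := fun j t =>
    measurable_snd.comp ((measurable_pi_apply t).comp (hZmeas j))
  have hμmeas : ∀ (j : ℕ) (t : ℝ), Measurable fun ω => (Z j ω t).1 := fun j t =>
    measurable_fst.comp ((measurable_pi_apply t).comp (hZmeas j))
  -- the L² absolute-sum dominating functions
  have key : ∀ t : ℝ,
      MemLp (fun ω => ∑ j ∈ Finset.range (N t ω), |(Z j ω t).2|) 2 P := by
    intro t
    set g : (ℝ → (Fin p → ℝ) × ℝ) → ℝ≥0∞ := fun z => ((‖(z t).2‖₊ : ℝ≥0∞)) ^ 2 with hg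
    have hgmeas : Measurable g :=
      ((measurable_snd.comp (measurable_pi_apply t)).nnnorm.coe_nnreal_ennreal).pow_const 2
    set B : ℝ≥0∞ := ∫⁻ ω, ((‖(Z 0 ω t).2‖₊ : ℝ≥0∞)) ^ 2 ∂P with hBdef
    have hBne : B ≠ ⊤ := by
      have h1 : Integrable (fun ω => ((Z 0 ω t).2) ^ 2) P :=
        (memLp_two_iff_integrable_sq (hβsq t).1).mp (hβsq t)
      have h2 := h1.2
      rw [hasFiniteIntegral_def] at h2
      have h3 : ∀ ω, ((‖(Z 0 ω t).2‖₊ : ℝ≥0∞)) ^ 2 = (‖((Z 0 ω t).2) ^ 2‖₊ : ℝ≥0∞) := by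
        intro ω; rw [nnnorm_pow]; push_cast; ring
      rw [hBdef]
      simp_rw [h3]
      exact h2.ne
    refine memℒp_two_randSum P (N t) (hNmeas t)
      (fun j ω => |(Z j ω t).2|) (fun j => (hβmeas j t).abs) B hBne ?_ ?_ ?_
    · -- identical second moments
      intro j
      have h4 : ∀ ω, ((‖|(Z j ω t).2|‖₊ : ℝ≥0∞)) ^ 2 = g (Z j ω) := by
        intro ω; rw [hg]; simp [Real.nnnorm_abs]
      calc ∫⁻ ω, ((‖|(Z j ω t).2|‖₊ : ℝ≥0∞)) ^ 2 ∂P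
          = ∫⁻ ω, g (Z j ω) ∂P := lintegral_congr h4
        _ = ∫⁻ z, g z ∂(P.map (Z j)) := (lintegral_map hgmeas (hZmeas j)).symm
        _ = ∫⁻ z, g z ∂(P.map (Z 0)) := by rw [hZident j]
        _ = ∫⁻ ω, g (Z 0 ω) ∂P := lintegral_map hgmeas (hZmeas 0)
        _ = B := by rw [hBdef, hg]
        _ ≤ B := le_rfl
    · -- independence of the count and the partial sums
      intro n
      set φ₁ : (ℝ → ℕ) → ℝ≥0∞ := fun u => if u t = n then 1 else 0 with hφ₁
      set φ₂ : (ℕ → ℝ → (Fin p → ℝ) × ℝ) → ℝ≥0∞ :=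
        fun z => (∑ j ∈ Finset.range n, (‖|(z j t).2|‖₊ : ℝ≥0∞)) ^ 2 with hφ₂
      have hφ₁meas : Measurable φ₁ :=
        (measurable_from_nat (f := fun m : ℕ => if m = n then (1 : ℝ≥0∞) else 0)).comp
          (measurable_pi_apply t)
      have hφ₂meas : Measurable φ₂ := by
        refine Measurable.pow_const ?_ 2
        refine Finset.measurable_sum _ fun j _ => ?_
        exact (((measurable_snd.comp ((measurable_pi_apply t).comp
          (measurable_pi_apply j))).abs).nnnorm).coe_nnreal_ennreal
      exact (hNZ.comp hφ₁meas hφ₂meas)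
    · -- second moment of the Poisson count
      have hPn : ∀ n : ℕ, P {ω | N t ω = n} = poissonMeasure lam {n} := by
        intro n
        rw [← hNpois t, Measure.map_apply (hNmeas t) (measurableSet_singleton n)]
        rfl
      simp_rw [hPn]
      exact poisson_sq_moment lam
  -- notation
  set F : ℕ → Ω → ℝ := fun n ω => ∑ j ∈ Finset.range (N t₁ ω),
    K (M ω (s₁ n) - (Z j ω t₁).1) (t₁ - τ) * (Z j ω t₁).2 with hF
  set Y : Ω → ℝ := fun ω => ∑ j ∈ Finset.range (N t₂ ω),
    K (M ω s₂ - (Z j ω t₂).1) (t₂ - τ) * (Z j ω t₂).2 with hYdef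
  set G : Ω → ℝ := fun ω => CK * ∑ j ∈ Finset.range (N t₁ ω), |(Z j ω t₁).2| with hGdef
  set H : Ω → ℝ := fun ω => CK * ∑ j ∈ Finset.range (N t₂ ω), |(Z j ω t₂).2| with hHdef
  have hMevalmeas : ∀ s : Fin p → ℝ, Measurable fun ω => M ω s := fun s =>
    (measurable_pi_apply s).comp hMmeas
  have hKterm : ∀ (s : Ω → Fin p → ℝ) (_ : Measurable s) (j : ℕ) (t u : ℝ),
      Measurable fun ω => K (s ω - (Z j ω t).1) u := by
    intro s hs j t u
    have : Measurable fun ω => (s ω - (Z j ω t).1, u) :=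
      (hs.sub (hμmeas j t)).prodMk measurable_const
    exact hKmeas.comp this
  have hFmeas : ∀ n, Measurable (F n) := by
    intro n
    exact measurable_randSum (N t₁) (hNmeas t₁) _ fun j =>
      (hKterm _ (hMevalmeas (s₁ n)) j t₁ (t₁ - τ)).mul (hβmeas j t₁)
  have hYmeas : Measurable Y :=
    measurable_randSum (N t₂) (hNmeas t₂) _ fun j =>
      (hKterm _ (hMevalmeas s₂) j t₂ (t₂ - τ)).mul (hβmeas j t₂)
  -- pointwise domination
  have hFG : ∀ n ω, |F n ω| ≤ G ω := by
    intro n ω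
    calc |F n ω| ≤ ∑ j ∈ Finset.range (N t₁ ω),
        |K (M ω (s₁ n) - (Z j ω t₁).1) (t₁ - τ) * (Z j ω t₁).2| :=
          Finset.abs_sum_le_sum_abs _ _
      _ ≤ ∑ j ∈ Finset.range (N t₁ ω), CK * |(Z j ω t₁).2| := by
          refine Finset.sum_le_sum fun j _ => ?_
          rw [abs_mul]
          exact mul_le_mul_of_nonneg_right (hKbdd _ _) (abs_nonneg _)
      _ = G ω := (Finset.mul_sum _ _ _).symm
  have hYH : ∀ ω, |Y ω| ≤ H ω := by
    intro ω
    calc |Y ω| ≤ ∑ j ∈ Finset.range (N t₂ ω),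
        |K (M ω s₂ - (Z j ω t₂).1) (t₂ - τ) * (Z j ω t₂).2| :=
          Finset.abs_sum_le_sum_abs _ _
      _ ≤ ∑ j ∈ Finset.range (N t₂ ω), CK * |(Z j ω t₂).2| := by
          refine Finset.sum_le_sum fun j _ => ?_
          rw [abs_mul]
          exact mul_le_mul_of_nonneg_right (hKbdd _ _) (abs_nonneg _)
      _ = H ω := (Finset.mul_sum _ _ _).symm
  have hGnn : ∀ ω, 0 ≤ G ω := fun ω => (abs_nonneg (F 0 ω)).trans (hFG 0 ω)
  have hHnn : ∀ ω, 0 ≤ H ω := fun ω => (abs_nonneg (Y ω)).trans (hYH ω)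
  -- integrability of the dominating functions
  have hG2 : MemLp G 2 P := (key t₁).const_mul CK
  have hH2 : MemLp H 2 P := (key t₂).const_mul CK
  have intG : Integrable G P :=
    memLp_one_iff_integrable.mp (hG2.mono_exponent one_le_two)
  have intGH : Integrable (fun ω => G ω * H ω) P := by
    have hhalf : (1 : ℝ≥0∞) / 1 = 1 / 2 + 1 / 2 := by
      rw [ENNReal.div_add_div_same]
      norm_num
      rw [ENNReal.div_self] <;> norm_num
    have := hH2.smul hG2 (r := 1)
    exact memLp_one_iff_integrable.mp (by simpa [smul_eq_mul] using this : MemLp (G * H) 1 P)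
  -- a.e. convergence to 0
  have hlim : ∀ᵐ ω ∂P, Tendsto (fun n => F n ω) atTop (nhds 0) := by
    filter_upwards [hMmono] with ω hω
    obtain ⟨ℓ, hℓ⟩ := hcoord
    have hterm : ∀ j, Tendsto
        (fun n => K (M ω (s₁ n) - (Z j ω t₁).1) (t₁ - τ) * (Z j ω t₁).2) atTop (nhds 0) := by
      intro j
      have hcomap : Tendsto (fun n => M ω (s₁ n) - (Z j ω t₁).1) atTop
          (Filter.comap (fun x : Fin p → ℝ => ‖x‖) atTop) := by
        rw [tendsto_comap_iff]
        have hMt : Tendsto (fun n => Mℓ ω ℓ (s₁ n ℓ)) atTop atTop := (hω ℓ).2.comp hℓ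
        have hsub : Tendsto (fun n => Mℓ ω ℓ (s₁ n ℓ) - (Z j ω t₁).1 ℓ) atTop atTop := by
          simpa [sub_eq_add_neg] using
            tendsto_atTop_add_const_right atTop (-(Z j ω t₁).1 ℓ) hMt
        refine tendsto_atTop_mono (fun n => ?_) hsub
        calc Mℓ ω ℓ (s₁ n ℓ) - (Z j ω t₁).1 ℓ
            = (M ω (s₁ n) - (Z j ω t₁).1) ℓ := by rw [Pi.sub_apply, hMcomp]
          _ ≤ |(M ω (s₁ n) - (Z j ω t₁).1) ℓ| := le_abs_self _
          _ ≤ ‖M ω (s₁ n) - (Z j ω t₁).1‖ := by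
              simpa [Real.norm_eq_abs] using
                norm_le_pi_norm (M ω (s₁ n) - (Z j ω t₁).1) ℓ
          _ = (fun x : Fin p → ℝ => ‖x‖) ((fun n => M ω (s₁ n) - (Z j ω t₁).1) n) := rfl
      have := ((hK0 (t₁ - τ)).comp hcomap).mul_const ((Z j ω t₁).2)
      simpa using this
    have hsum := tendsto_finset_sum (Finset.range (N t₁ ω)) (fun j _ => hterm j)
    simpa using hsum
  -- dominated convergence for the two integrals
  have h2 : Tendsto (fun n => ∫ ω, F n ω ∂P) atTop (nhds 0) := by
    have := tendsto_integral_of_dominated_convergence (μ := P) (F := F) (f := fun _ => (0 : ℝ))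
      G (fun n => (hFmeas n).aestronglyMeasurable) intG
      (fun n => ae_of_all _ fun ω => by simpa [Real.norm_eq_abs] using hFG n ω)
      (by filter_upwards [hlim] with ω hω using hω)
    simpa using this
  have h1 : Tendsto (fun n => ∫ ω, F n ω * Y ω ∂P) atTop (nhds 0) := by
    have := tendsto_integral_of_dominated_convergence (μ := P)
      (F := fun n ω => F n ω * Y ω) (f := fun _ => (0 : ℝ))
      (fun ω => G ω * H ω)
      (fun n => ((hFmeas n).mul hYmeas).aestronglyMeasurable) intGH
      (fun n => ae_of_all _ fun ω => by
        rw [Real.norm_eq_abs, abs_mul]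
        exact mul_le_mul (hFG n ω) (hYH ω) (abs_nonneg _) (hGnn ω))
      (by filter_upwards [hlim] with ω hω using by simpa using hω.mul_const (Y ω))
    simpa using this
  have hfinal := h1.sub (h2.mul_const (∫ ω, Y ω ∂P))
  simp only [covar]
  simpa using hfinal
end

section
/- Suppose K : ℝ^p → ℝ is twice continuously differentiable with ‖DK(x)‖ ≤ c₁ and ‖D²K(x)‖ ≤ c₂ for all x ∈ ℝ^p, and that for almost every ω the map s ↦ M(ω, s) is twice continuously differentiable with ‖DM(ω, s)‖ ≤ c₃ and ‖D²M(ω, s)‖ ≤ c₄ for all s, where c₁, c₂, c₃, c₄ are deterministic constants. Then f is L_r-differentiable in s: for almost every ω the path s ↦ f(ω, s) is differentiable, and for every s₀ ∈ ℝ^p the Taylor remainder satisfies E[|f(s₀ + u) − f(s₀) − D_s f(·, s₀)(u)|^r] / ‖u‖^r → 0 as u → 0 in ℝ^p \ {0}, where D_s f(ω, s₀) denotes the pathwise Fréchet derivative of f(ω, ·) at s₀. -/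
open MeasureTheory ProbabilityTheory Filter
open scoped ENNReal NNReal


section AuxCalc
variable {E F : Type*} [NormedAddCommGroup E] [NormedSpace ℝ E]
  [NormedAddCommGroup F] [NormedSpace ℝ F]

lemma aux_norm_fderiv_fderiv (f : E → F) (x : E) :
    ‖fderiv ℝ (fderiv ℝ f) x‖ = ‖iteratedFDeriv ℝ 2 f x‖ := by
  rw [← norm_iteratedFDeriv_fderiv (n := 1)]
  rw [← norm_iteratedFDeriv_fderiv (n := 0), norm_iteratedFDeriv_zero]

lemma aux_fderiv_lip {f : E → F} {c : ℝ} (hf : ContDiff ℝ 2 f)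
    (hc : ∀ x, ‖iteratedFDeriv ℝ 2 f x‖ ≤ c) (x y : E) :
    ‖fderiv ℝ f x - fderiv ℝ f y‖ ≤ c * ‖x - y‖ := by
  have hd : Differentiable ℝ (fderiv ℝ f) :=
    (hf.fderiv_right (m := 1) (by norm_num)).differentiable (by norm_num)
  exact convex_univ.norm_image_sub_le_of_norm_fderiv_le (fun z _ => (hd z))
    (fun z _ => by rw [aux_norm_fderiv_fderiv]; exact hc z) (Set.mem_univ y) (Set.mem_univ x)

lemma aux_lip {f : E → F} {c : ℝ} (hf : Differentiable ℝ f)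
    (hc : ∀ x, ‖fderiv ℝ f x‖ ≤ c) (x y : E) :
    ‖f x - f y‖ ≤ c * ‖x - y‖ :=
  convex_univ.norm_image_sub_le_of_norm_fderiv_le (fun z _ => hf z)
    (fun z _ => hc z) (Set.mem_univ y) (Set.mem_univ x)

lemma aux_taylor {g : F → ℝ} {f : E → F} {c₁ c₂ c₃ c₄ : ℝ}
    (hc1 : 0 ≤ c₁) (hc2 : 0 ≤ c₂) (hc3 : 0 ≤ c₃) (hc4 : 0 ≤ c₄)
    (hg : ContDiff ℝ 2 g) (hg1 : ∀ x, ‖fderiv ℝ g x‖ ≤ c₁)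
    (hg2 : ∀ x y, ‖fderiv ℝ g x - fderiv ℝ g y‖ ≤ c₂ * ‖x - y‖)
    (hf : ContDiff ℝ 2 f) (hf1 : ∀ x, ‖fderiv ℝ f x‖ ≤ c₃)
    (hf2 : ∀ x y, ‖fderiv ℝ f x - fderiv ℝ f y‖ ≤ c₄ * ‖x - y‖)
    (s₀ u : E) :
    ‖g (f (s₀ + u)) - g (f s₀) - fderiv ℝ (fun x => g (f x)) s₀ u‖ ≤
      (c₂ * c₃ * c₃ + c₁ * c₄) * (‖u‖ * ‖u‖) := by
  set L : ℝ := c₂ * c₃ * c₃ + c₁ * c₄ with hL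
  have hL0 : 0 ≤ L := by positivity
  have hdg : Differentiable ℝ g := hg.differentiable (by norm_num)
  have hdf : Differentiable ℝ f := hf.differentiable (by norm_num)
  have hdgf : Differentiable ℝ (fun x => g (f x)) := fun x => (hdg (f x)).comp x (hdf x)
  have hchain : ∀ x, fderiv ℝ (fun x => g (f x)) x =
      (fderiv ℝ g (f x)).comp (fderiv ℝ f x) := fun x =>
    fderiv_comp x (hdg (f x)) (hdf x)
  have hflip : ∀ x y, ‖f x - f y‖ ≤ c₃ * ‖x - y‖ := aux_lip hdf hf1
  have hDlip : ∀ x y, ‖fderiv ℝ (fun x => g (f x)) x - fderiv ℝ (fun x => g (f x)) y‖ ≤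
      L * ‖x - y‖ := by
    intro x y
    rw [hchain x, hchain y]
    have key : (fderiv ℝ g (f x)).comp (fderiv ℝ f x) - (fderiv ℝ g (f y)).comp (fderiv ℝ f y)
        = (fderiv ℝ g (f x) - fderiv ℝ g (f y)).comp (fderiv ℝ f x)
          + (fderiv ℝ g (f y)).comp (fderiv ℝ f x - fderiv ℝ f y) := by
      rw [ContinuousLinearMap.sub_comp, ContinuousLinearMap.comp_sub]; abel
    rw [key]
    have h1 : ‖(fderiv ℝ g (f x) - fderiv ℝ g (f y)).comp (fderiv ℝ f x)‖ ≤
        (c₂ * (c₃ * ‖x - y‖)) * c₃ := by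
      refine (ContinuousLinearMap.opNorm_comp_le _ _).trans ?_
      have h2 : ‖fderiv ℝ g (f x) - fderiv ℝ g (f y)‖ ≤ c₂ * (c₃ * ‖x - y‖) :=
        (hg2 (f x) (f y)).trans (by
          have := hflip x y
          nlinarith [norm_nonneg (f x - f y)])
      exact mul_le_mul h2 (hf1 x) (norm_nonneg _) (by positivity)
    have h3 : ‖(fderiv ℝ g (f y)).comp (fderiv ℝ f x - fderiv ℝ f y)‖ ≤ c₁ * (c₄ * ‖x - y‖) := by
      refine (ContinuousLinearMap.opNorm_comp_le _ _).trans ?_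
      exact mul_le_mul (hg1 _) (hf2 x y) (norm_nonneg _) hc1
    calc ‖_ + _‖ ≤ _ := norm_add_le _ _
      _ ≤ (c₂ * (c₃ * ‖x - y‖)) * c₃ + c₁ * (c₄ * ‖x - y‖) := add_le_add h1 h3
      _ = L * ‖x - y‖ := by rw [hL]; ring
  have hmem1 : s₀ ∈ Metric.closedBall s₀ ‖u‖ := Metric.mem_closedBall_self (norm_nonneg u)
  have hmem2 : s₀ + u ∈ Metric.closedBall s₀ ‖u‖ := by
    rw [Metric.mem_closedBall, dist_eq_norm, add_sub_cancel_left]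
  have := Convex.norm_image_sub_le_of_norm_fderiv_le'
    (f := fun x => g (f x)) (φ := fderiv ℝ (fun x => g (f x)) s₀) (C := L * ‖u‖)
    (fun x _ => (hdgf x))
    (fun x hx => by
      refine (hDlip x s₀).trans ?_
      have hx' : ‖x - s₀‖ ≤ ‖u‖ := by rwa [Metric.mem_closedBall, dist_eq_norm] at hx
      exact mul_le_mul_of_nonneg_left hx' hL0)
    (convex_closedBall s₀ ‖u‖) hmem1 hmem2
  rw [add_sub_cancel_left] at this
  calc ‖g (f (s₀ + u)) - g (f s₀) - fderiv ℝ (fun x => g (f x)) s₀ u‖ ≤ L * ‖u‖ * ‖u‖ := this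
    _ = L * (‖u‖ * ‖u‖) := by ring

end AuxCalc


lemma aux_measurable_sum_range {Ω : Type*} [MeasurableSpace Ω] {N : Ω → ℕ}
    (hN : Measurable N) {G : ℕ → Ω → ℝ} (hG : ∀ j, Measurable (G j)) :
    Measurable fun ω => ∑ j ∈ Finset.range (N ω), G j ω := by
  have h : (fun ω => ∑ j ∈ Finset.range (N ω), G j ω) =
      (fun q : Ω × ℕ => ∑ j ∈ Finset.range q.2, G j q.1) ∘ (fun ω => (ω, N ω)) := rfl
  rw [h]
  exact (measurable_from_prod_countable_left fun n =>
    (Finset.measurable_sum (Finset.range n) fun j _ => hG j : Measurable _)).comp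
    (measurable_id.prodMk hN)

lemma aux_pow_sum {n : ℕ} (x : ℕ → ℝ) (hx : ∀ j, 0 ≤ x j) {r : ℝ} (hr : 1 ≤ r) :
    (∑ j ∈ Finset.range n, x j) ^ r ≤ (n : ℝ) ^ r * ∑ j ∈ Finset.range n, x j ^ r := by
  have hr0 : (0:ℝ) < r := lt_of_lt_of_le zero_lt_one hr
  set A : ℝ := ∑ j ∈ Finset.range n, x j ^ r with hA
  have hA0 : 0 ≤ A := Finset.sum_nonneg fun j _ => Real.rpow_nonneg (hx j) r
  set T : ℝ := A ^ r⁻¹ with hT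
  have hT0 : 0 ≤ T := Real.rpow_nonneg hA0 _
  have hstep : ∀ j ∈ Finset.range n, x j ≤ T := by
    intro j hj
    have h1 : x j ^ r ≤ A := Finset.single_le_sum
      (f := fun i => x i ^ r) (fun i _ => Real.rpow_nonneg (hx i) r) hj
    calc x j = (x j ^ r) ^ r⁻¹ := (Real.rpow_rpow_inv (hx j) hr0.ne').symm
      _ ≤ T := Real.rpow_le_rpow (Real.rpow_nonneg (hx j) r) h1 (by positivity)
  have hsum : ∑ j ∈ Finset.range n, x j ≤ (n : ℝ) * T := by
    have := Finset.sum_le_card_nsmul (Finset.range n) x T hstep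
    simpa [nsmul_eq_mul] using this
  calc (∑ j ∈ Finset.range n, x j) ^ r ≤ ((n : ℝ) * T) ^ r :=
        Real.rpow_le_rpow (Finset.sum_nonneg fun j _ => hx j) hsum hr0.le
    _ = (n : ℝ) ^ r * T ^ r := Real.mul_rpow (by positivity) hT0
    _ = (n : ℝ) ^ r * A := by rw [hT, Real.rpow_inv_rpow hA0 hr0.ne']

lemma aux_poisson_summable (lam : NNReal) {r : ℝ} (hr : 1 ≤ r) :
    Summable fun n : ℕ => (n : ℝ) ^ r * (n : ℝ) * poissonPMFReal lam n := by
  set k : ℕ := ⌈r⌉₊ + 1 with hk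
  have hnn : ∀ n : ℕ, 0 ≤ (n : ℝ) ^ r * (n : ℝ) * poissonPMFReal lam n := by
    intro n
    have := poissonPMFReal_nonneg (r := lam) (n := n)
    positivity
  -- bound (n:ℝ)^r * n ≤ n ^ k
  have hbound : ∀ n : ℕ, (n : ℝ) ^ r * (n : ℝ) ≤ (n : ℝ) ^ k := by
    intro n
    rcases Nat.eq_zero_or_pos n with h0 | h1
    · subst h0
      simp [Real.zero_rpow (by positivity : r ≠ 0), hk]
    · have hn1 : (1:ℝ) ≤ (n : ℝ) := by exact_mod_cast h1
      have h2 : (n : ℝ) ^ r ≤ (n : ℝ) ^ (⌈r⌉₊ : ℝ) :=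
        Real.rpow_le_rpow_of_exponent_le hn1 (Nat.le_ceil r)
      rw [Real.rpow_natCast] at h2
      calc (n : ℝ) ^ r * (n : ℝ) ≤ (n : ℝ) ^ (⌈r⌉₊ : ℕ) * (n : ℝ) :=
            mul_le_mul_of_nonneg_right h2 (by positivity)
        _ = (n : ℝ) ^ k := by rw [hk, pow_succ]
  -- get C with n^k ≤ C * 2^n
  obtain ⟨C, hC⟩ : ∃ C : ℝ, ∀ n : ℕ, (n : ℝ) ^ k * (1/2) ^ n ≤ C := by
    have hs : Summable fun n : ℕ => (n : ℝ) ^ k * (1/2 : ℝ) ^ n :=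
      summable_pow_mul_geometric_of_norm_lt_one k (by norm_num)
    have ht := hs.tendsto_atTop_zero
    obtain ⟨C, hC⟩ := ht.bddAbove_range
    exact ⟨C, fun n => hC ⟨n, rfl⟩⟩
  have hC0 : ∀ n : ℕ, (n : ℝ) ^ k ≤ C * 2 ^ n := by
    intro n
    have := hC n
    have h2 : (0:ℝ) < 2 ^ n := by positivity
    rw [div_pow, one_pow, mul_one_div, div_le_iff₀ h2] at this
    exact this
  refine Summable.of_nonneg_of_le hnn (fun n => ?_)
    ((Real.summable_pow_div_factorial (2 * (lam:ℝ))).mul_left (Real.exp (-(lam:ℝ)) * C))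
  have h1 : (n:ℝ) ^ r * (n:ℝ) * poissonPMFReal lam n ≤ (n:ℝ) ^ k * poissonPMFReal lam n :=
    mul_le_mul_of_nonneg_right (hbound n) poissonPMFReal_nonneg
  refine h1.trans ?_
  unfold poissonPMFReal
  rw [mul_pow]
  calc (n:ℝ) ^ k * (Real.exp (-(lam:ℝ)) * (lam:ℝ) ^ n / ((n.factorial : ℕ) : ℝ)) ≤
        (C * 2 ^ n) * (Real.exp (-(lam:ℝ)) * (lam:ℝ) ^ n / ((n.factorial : ℕ) : ℝ)) := by
        refine mul_le_mul_of_nonneg_right (hC0 n) ?_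
        positivity
    _ = Real.exp (-(lam:ℝ)) * C * ((2:ℝ) ^ n * (lam:ℝ) ^ n / ((n.factorial : ℕ) : ℝ)) := by ring

lemma aux_moment {Ω : Type*} [MeasurableSpace Ω] (P : Measure Ω) [IsProbabilityMeasure P]
    {p : ℕ} (lam : NNReal)
    (N : Ω → ℕ) (hNmeas : Measurable N) (hNpois : P.map N = poissonMeasure lam)
    (μ : ℕ → Ω → (Fin p → ℝ)) (β : ℕ → Ω → ℝ)
    (hμβmeas : ∀ j, Measurable (fun ω => (μ j ω, β j ω)))
    (M : Ω → (Fin p → ℝ) → (Fin p → ℝ)) (hMmeas : Measurable M)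
    (hNindep : IndepFun N (fun ω => ((fun j => (μ j ω, β j ω)), M ω)) P)
    (hident : ∀ j, P.map (fun ω => (μ j ω, β j ω)) = P.map (fun ω => (μ 0 ω, β 0 ω)))
    {r : ℝ} (hr : 1 ≤ r) (hβr : Integrable (fun ω => |β 0 ω| ^ r) P) :
    ∫⁻ ω, ENNReal.ofReal ((∑ j ∈ Finset.range (N ω), |β j ω|) ^ r) ∂P < ⊤ := by
  have hr0 : (0:ℝ) < r := lt_of_lt_of_le zero_lt_one hr
  have hβmeas : ∀ j, Measurable (β j) := fun j => measurable_snd.comp (hμβmeas j)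
  have hsets : ∀ n, MeasurableSet {ω | N ω = n} := fun n => hNmeas (measurableSet_singleton n)
  have hdisj : Pairwise (Function.onFun Disjoint fun n => {ω | N ω = n}) := by
    intro m n hmn
    refine Set.disjoint_left.2 fun ω h1 h2 => hmn ?_
    exact h1.symm.trans h2
  have hcover : (⋃ n, {ω | N ω = n}) = Set.univ :=
    Set.eq_univ_of_forall fun ω => Set.mem_iUnion.2 ⟨N ω, rfl⟩
  have hPn : ∀ n, P {ω | N ω = n} = ENNReal.ofReal (poissonPMFReal lam n) := by
    intro n
    have h1 : P {ω | N ω = n} = P.map N {n} := by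
      rw [Measure.map_apply hNmeas (measurableSet_singleton n)]
      rfl
    rw [h1, hNpois]
    rw [poissonMeasure_singleton]
    rfl
  have hrpowmeas : Measurable fun x : ℝ => x ^ r :=
    (Real.continuous_rpow_const hr0.le).measurable
  have hhj_meas : ∀ j, Measurable fun ω => ENNReal.ofReal (|β j ω| ^ r) := fun j =>
    ENNReal.measurable_ofReal.comp (hrpowmeas.comp ((hβmeas j).abs))
  set Bβ : ℝ≥0∞ := ∫⁻ ω, ENNReal.ofReal (|β 0 ω| ^ r) ∂P with hBβ
  have hident' : ∀ j, ∫⁻ ω, ENNReal.ofReal (|β j ω| ^ r) ∂P = Bβ := by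
    intro j
    have hψ : Measurable fun q : (Fin p → ℝ) × ℝ => ENNReal.ofReal (|q.2| ^ r) :=
      ENNReal.measurable_ofReal.comp (hrpowmeas.comp measurable_snd.abs)
    rw [hBβ, ← lintegral_map hψ (hμβmeas j), hident j, lintegral_map hψ (hμβmeas 0)]
  have hBβtop : Bβ < ⊤ := by
    refine lt_of_eq_of_lt ?_ hβr.hasFiniteIntegral
    refine lintegral_congr fun ω => ?_
    rw [← Real.enorm_eq_ofReal (Real.rpow_nonneg (abs_nonneg _) r)]
  have hpairmeas : Measurable fun ω => ((fun i => (μ i ω, β i ω)), M ω) :=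
    Measurable.prodMk (measurable_pi_lambda _ fun i => hμβmeas i) hMmeas
  have hindep : ∀ n j, ∫⁻ ω in {ω | N ω = n}, ENNReal.ofReal (|β j ω| ^ r) ∂P
      = P {ω | N ω = n} * Bβ := by
    intro n j
    rw [← lintegral_indicator (hsets n)]
    set φ : ℕ → ℝ≥0∞ := fun m => if m = n then (1:ℝ≥0∞) else 0 with hφ
    set ψ : (ℕ → (Fin p → ℝ) × ℝ) × ((Fin p → ℝ) → (Fin p → ℝ)) → ℝ≥0∞ :=
      fun q => ENNReal.ofReal (|(q.1 j).2| ^ r) with hψ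
    have hX : Set.indicator {ω | N ω = n} (fun ω => ENNReal.ofReal (|β j ω| ^ r))
        = fun ω => (φ ∘ N) ω *
          (ψ ∘ (fun ω => ((fun i => (μ i ω, β i ω)), M ω))) ω := by
      funext ω
      by_cases h : N ω = n <;>
        simp [Set.indicator_apply, h, hφ, hψ, Function.comp]
    rw [hX]
    have hφm : Measurable φ :=
      Measurable.ite measurableSet_eq measurable_const measurable_const
    have hψm : Measurable ψ :=
      ENNReal.measurable_ofReal.comp (hrpowmeas.comp
        (((measurable_pi_apply j).comp measurable_fst).snd.abs))
    have hind : IndepFun (φ ∘ N)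
        (ψ ∘ (fun ω => ((fun i => (μ i ω, β i ω)), M ω))) P := hNindep.comp hφm hψm
    have hmul := lintegral_mul_eq_lintegral_mul_lintegral_of_indepFun
      (hφm.comp hNmeas) (hψm.comp hpairmeas) hind
    have hXint : ∫⁻ ω, (φ ∘ N) ω ∂P = P {ω | N ω = n} := by
      have h2 : (φ ∘ N) = Set.indicator {ω | N ω = n} (fun _ => (1:ℝ≥0∞)) := by
        funext ω
        by_cases h : N ω = n <;> simp [Set.indicator_apply, h, hφ, Function.comp]
      rw [h2]
      exact lintegral_indicator_one (hsets n)
    calc ∫⁻ ω, (φ ∘ N) ω * (ψ ∘ fun ω => ((fun i => (μ i ω, β i ω)), M ω)) ω ∂P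
        = (∫⁻ ω, (φ ∘ N) ω ∂P) *
          ∫⁻ ω, (ψ ∘ fun ω => ((fun i => (μ i ω, β i ω)), M ω)) ω ∂P := hmul
      _ = P {ω | N ω = n} * Bβ := by
          rw [hXint]
          congr 1
          exact hident' j
  have hcore : ∀ n : ℕ,
      ∫⁻ ω in {ω | N ω = n}, ENNReal.ofReal ((∑ j ∈ Finset.range (N ω), |β j ω|) ^ r) ∂P
      ≤ ENNReal.ofReal ((n:ℝ) ^ r) * ((n : ℝ≥0∞) * (P {ω | N ω = n} * Bβ)) := by
    intro n
    have he : ∫⁻ ω in {ω | N ω = n}, ENNReal.ofReal ((∑ j ∈ Finset.range (N ω), |β j ω|) ^ r) ∂P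
        = ∫⁻ ω in {ω | N ω = n}, ENNReal.ofReal ((∑ j ∈ Finset.range n, |β j ω|) ^ r) ∂P := by
      refine setLIntegral_congr_fun (hsets n) (fun ω hω => ?_)
      have hω' : N ω = n := hω
      rw [hω']
    rw [he]
    have hpt : ∀ ω, ENNReal.ofReal ((∑ j ∈ Finset.range n, |β j ω|) ^ r)
        ≤ ENNReal.ofReal ((n:ℝ) ^ r) * ∑ j ∈ Finset.range n, ENNReal.ofReal (|β j ω| ^ r) := by
      intro ω
      calc ENNReal.ofReal ((∑ j ∈ Finset.range n, |β j ω|) ^ r)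
          ≤ ENNReal.ofReal ((n:ℝ) ^ r * ∑ j ∈ Finset.range n, |β j ω| ^ r) :=
            ENNReal.ofReal_le_ofReal (aux_pow_sum _ (fun j => abs_nonneg _) hr)
        _ = ENNReal.ofReal ((n:ℝ) ^ r) * ENNReal.ofReal (∑ j ∈ Finset.range n, |β j ω| ^ r) :=
            ENNReal.ofReal_mul (by positivity)
        _ = ENNReal.ofReal ((n:ℝ) ^ r) * ∑ j ∈ Finset.range n, ENNReal.ofReal (|β j ω| ^ r) := by
            rw [ENNReal.ofReal_sum_of_nonneg (fun i _ => Real.rpow_nonneg (abs_nonneg _) r)]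
    calc ∫⁻ ω in {ω | N ω = n}, ENNReal.ofReal ((∑ j ∈ Finset.range n, |β j ω|) ^ r) ∂P
        ≤ ∫⁻ ω in {ω | N ω = n}, ENNReal.ofReal ((n:ℝ) ^ r) *
            ∑ j ∈ Finset.range n, ENNReal.ofReal (|β j ω| ^ r) ∂P := lintegral_mono hpt
      _ = ENNReal.ofReal ((n:ℝ) ^ r) *
            ∫⁻ ω in {ω | N ω = n}, ∑ j ∈ Finset.range n, ENNReal.ofReal (|β j ω| ^ r) ∂P :=
          lintegral_const_mul' _ _ ENNReal.ofReal_ne_top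
      _ = ENNReal.ofReal ((n:ℝ) ^ r) *
            ∑ j ∈ Finset.range n, ∫⁻ ω in {ω | N ω = n}, ENNReal.ofReal (|β j ω| ^ r) ∂P := by
          rw [lintegral_finset_sum _ (fun j _ => hhj_meas j)]
      _ = ENNReal.ofReal ((n:ℝ) ^ r) * ∑ j ∈ Finset.range n, P {ω | N ω = n} * Bβ := by
          rw [Finset.sum_congr rfl fun j _ => hindep n j]
      _ = ENNReal.ofReal ((n:ℝ) ^ r) * ((n : ℝ≥0∞) * (P {ω | N ω = n} * Bβ)) := by
          rw [Finset.sum_const, Finset.card_range, nsmul_eq_mul]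
  have hsplit : ∫⁻ ω, ENNReal.ofReal ((∑ j ∈ Finset.range (N ω), |β j ω|) ^ r) ∂P
      = ∑' n, ∫⁻ ω in {ω | N ω = n},
          ENNReal.ofReal ((∑ j ∈ Finset.range (N ω), |β j ω|) ^ r) ∂P := by
    rw [← setLIntegral_univ, ← hcover, lintegral_iUnion hsets hdisj]
  rw [hsplit]
  have hsummable := aux_poisson_summable lam hr
  have hnn : ∀ n : ℕ, 0 ≤ (n:ℝ) ^ r * (n:ℝ) * poissonPMFReal lam n := fun n => by
    have := poissonPMFReal_nonneg (r := lam) (n := n)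
    positivity
  calc ∑' n, ∫⁻ ω in {ω | N ω = n},
        ENNReal.ofReal ((∑ j ∈ Finset.range (N ω), |β j ω|) ^ r) ∂P
      ≤ ∑' n : ℕ, ENNReal.ofReal ((n:ℝ) ^ r) * ((n : ℝ≥0∞) * (P {ω | N ω = n} * Bβ)) :=
        ENNReal.tsum_le_tsum fun n => hcore n
    _ = ∑' n : ℕ, ENNReal.ofReal ((n:ℝ) ^ r * (n:ℝ) * poissonPMFReal lam n) * Bβ := by
        refine tsum_congr fun n => ?_
        rw [hPn n, ← ENNReal.ofReal_natCast n,
          ENNReal.ofReal_mul (by positivity : (0:ℝ) ≤ (n:ℝ) ^ r * (n:ℝ)),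
          ENNReal.ofReal_mul (by positivity : (0:ℝ) ≤ (n:ℝ) ^ r)]
        ring
    _ = ENNReal.ofReal (∑' n : ℕ, (n:ℝ) ^ r * (n:ℝ) * poissonPMFReal lam n) * Bβ := by
        rw [ENNReal.ofReal_tsum_of_nonneg hnn hsummable, ENNReal.tsum_mul_right]
    _ < ⊤ := ENNReal.mul_lt_top ENNReal.ofReal_lt_top hBβtop

/-- The Lévy-dynamic field at a fixed time:
`f (ω, s) = ∑_{j < N ω} K (M (ω, s) - μ j ω) * β j ω`. -/
noncomputable def levyField {Ω : Type*} {p : ℕ} (N : Ω → ℕ) (μ : ℕ → Ω → (Fin p → ℝ))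
    (β : ℕ → Ω → ℝ) (M : Ω → (Fin p → ℝ) → (Fin p → ℝ)) (K : (Fin p → ℝ) → ℝ)
    (ω : Ω) (s : Fin p → ℝ) : ℝ :=
  ∑ j ∈ Finset.range (N ω), K (M ω s - μ j ω) * β j ω

/-- **L_r-differentiability of the Lévy-dynamic field at a fixed time.**
Suppose `K` is twice continuously differentiable with uniformly bounded first and second
derivatives, and almost surely `s ↦ M (ω, s)` is twice continuously differentiable with
derivatives bounded by deterministic constants. Then almost surely the path `s ↦ f (ω, s)`
is differentiable, and for every `s₀` the `r`-th mean of the Taylor remainder, divided by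
`‖u‖^r`, tends to `0` as `u → 0`. -/
theorem levyDynamic_Lr_differentiable
    {Ω : Type*} [MeasurableSpace Ω] (P : Measure Ω) [IsProbabilityMeasure P]
    (p : ℕ) (hp : 1 ≤ p) (lam : NNReal) (hlam : 0 < lam)
    (N : Ω → ℕ) (hNmeas : Measurable N) (hNpois : P.map N = poissonMeasure lam)
    (μ : ℕ → Ω → (Fin p → ℝ)) (β : ℕ → Ω → ℝ)
    (hμβmeas : ∀ j, Measurable (fun ω => (μ j ω, β j ω)))
    (M : Ω → (Fin p → ℝ) → (Fin p → ℝ)) (hMmeas : Measurable M)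
    -- N is independent of the pair (((μ_j, β_j))_j, M)
    (hNindep : IndepFun N (fun ω => ((fun j => (μ j ω, β j ω)), M ω)) P)
    -- the sequence ((μ_j, β_j))_j is i.i.d. …
    (hiid : iIndepFun (fun j ω => (μ j ω, β j ω)) P)
    (hident : ∀ j, P.map (fun ω => (μ j ω, β j ω)) = P.map (fun ω => (μ 0 ω, β 0 ω)))
    -- … and independent of M
    (hseqM : IndepFun (fun ω => fun j => (μ j ω, β j ω)) M P)
    -- r ≥ 1 and E |β₀|^r < ∞
    (r : ℝ) (hr : 1 ≤ r) (hβr : Integrable (fun ω => |β 0 ω| ^ r) P)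
    (K : (Fin p → ℝ) → ℝ) (c₁ c₂ c₃ c₄ : ℝ)
    (hK : ContDiff ℝ 2 K)
    (hK1 : ∀ x, ‖fderiv ℝ K x‖ ≤ c₁)
    (hK2 : ∀ x, ‖iteratedFDeriv ℝ 2 K x‖ ≤ c₂)
    (hM : ∀ᵐ ω ∂P, ContDiff ℝ 2 (M ω) ∧
      (∀ s, ‖fderiv ℝ (M ω) s‖ ≤ c₃) ∧ ∀ s, ‖iteratedFDeriv ℝ 2 (M ω) s‖ ≤ c₄) :
    (∀ᵐ ω ∂P, Differentiable ℝ (levyField N μ β M K ω)) ∧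
    ∀ s₀ : Fin p → ℝ,
      Tendsto (fun u : Fin p → ℝ =>
          (∫ ω, |levyField N μ β M K ω (s₀ + u) - levyField N μ β M K ω s₀ -
            fderiv ℝ (levyField N μ β M K ω) s₀ u| ^ r ∂P) / ‖u‖ ^ r)
        (nhdsWithin 0 {0}ᶜ) (nhds 0) := by
  classical
  have hr0 : (0:ℝ) < r := lt_of_lt_of_le zero_lt_one hr
  have hβmeas : ∀ j, Measurable (β j) := fun j => measurable_snd.comp (hμβmeas j)
  have hμmeas : ∀ j, Measurable (μ j) := fun j => measurable_fst.comp (hμβmeas j)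
  have hc1 : 0 ≤ c₁ := le_trans (norm_nonneg _) (hK1 0)
  have hc2 : 0 ≤ c₂ := le_trans (norm_nonneg _) (hK2 0)
  obtain ⟨ω₀, hω₀⟩ := hM.exists
  have hc3 : 0 ≤ c₃ := le_trans (norm_nonneg _) (hω₀.2.1 0)
  have hc4 : 0 ≤ c₄ := le_trans (norm_nonneg _) (hω₀.2.2 0)
  set L : ℝ := c₂ * c₃ * c₃ + c₁ * c₄ with hLdef
  have hL0 : 0 ≤ L := by positivity
  have hKlip : ∀ x y, ‖fderiv ℝ K x - fderiv ℝ K y‖ ≤ c₂ * ‖x - y‖ := aux_fderiv_lip hK hK2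
  have hKdiff : Differentiable ℝ K := hK.differentiable (by norm_num)
  have hdiffAE : ∀ᵐ ω ∂P, Differentiable ℝ (levyField N μ β M K ω) := by
    refine hM.mono fun ω hω => ?_
    have h0 : levyField N μ β M K ω =
        fun s => ∑ j ∈ Finset.range (N ω), K (M ω s - μ j ω) * β j ω := rfl
    rw [h0]
    refine Differentiable.fun_sum fun j _ => ?_
    exact (hKdiff.comp ((hω.1.differentiable (by norm_num)).sub_const (μ j ω))).mul_const _
  refine ⟨hdiffAE, fun s₀ => ?_⟩
  have hFmeas : ∀ s, Measurable fun ω => levyField N μ β M K ω s := by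
    intro s
    refine aux_measurable_sum_range hNmeas fun j => ?_
    have h1 : Measurable fun ω => M ω s := (measurable_pi_apply s).comp hMmeas
    exact (hK.continuous.measurable.comp (h1.sub (hμmeas j))).mul (hβmeas j)
  -- pathwise remainder bound
  have hrem : ∀ ω, (ContDiff ℝ 2 (M ω) ∧ (∀ s, ‖fderiv ℝ (M ω) s‖ ≤ c₃) ∧
      ∀ s, ‖iteratedFDeriv ℝ 2 (M ω) s‖ ≤ c₄) → ∀ u : Fin p → ℝ,
      |levyField N μ β M K ω (s₀ + u) - levyField N μ β M K ω s₀ -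
        fderiv ℝ (levyField N μ β M K ω) s₀ u| ≤
        L * (‖u‖ * ‖u‖) * ∑ j ∈ Finset.range (N ω), |β j ω| := by
    intro ω hω u
    have hMlip : ∀ x y, ‖fderiv ℝ (M ω) x - fderiv ℝ (M ω) y‖ ≤ c₄ * ‖x - y‖ :=
      aux_fderiv_lip hω.1 hω.2.2
    have hfj : ∀ j : ℕ, ContDiff ℝ 2 (fun s => M ω s - μ j ω) := fun j =>
      hω.1.sub contDiff_const
    have hfj1 : ∀ (j : ℕ) x, ‖fderiv ℝ (fun s => M ω s - μ j ω) x‖ ≤ c₃ := fun j x => by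
      rw [fderiv_sub_const]; exact hω.2.1 x
    have hfj2 : ∀ (j : ℕ) x y, ‖fderiv ℝ (fun s => M ω s - μ j ω) x -
        fderiv ℝ (fun s => M ω s - μ j ω) y‖ ≤ c₄ * ‖x - y‖ := fun j x y => by
      rw [fderiv_sub_const, fderiv_sub_const]; exact hMlip x y
    have hψdiff : ∀ j : ℕ, Differentiable ℝ (fun s => K (M ω s - μ j ω)) := fun j =>
      hKdiff.comp ((hfj j).differentiable (by norm_num))
    have htaylor : ∀ j : ℕ, |K (M ω (s₀ + u) - μ j ω) - K (M ω s₀ - μ j ω) -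
        fderiv ℝ (fun s => K (M ω s - μ j ω)) s₀ u| ≤ L * (‖u‖ * ‖u‖) := by
      intro j
      have h := aux_taylor hc1 hc2 hc3 hc4 hK hK1 hKlip (hfj j) (hfj1 j) (hfj2 j) s₀ u
      simpa [Real.norm_eq_abs] using h
    have hdiffs : ∀ j ∈ Finset.range (N ω), DifferentiableAt ℝ
        (fun s => K (M ω s - μ j ω) * β j ω) s₀ := fun j _ => (hψdiff j s₀).mul_const _
    have hsum_eq : fderiv ℝ (levyField N μ β M K ω) s₀ =
        ∑ j ∈ Finset.range (N ω), β j ω • fderiv ℝ (fun s => K (M ω s - μ j ω)) s₀ := by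
      have h1 : fderiv ℝ (levyField N μ β M K ω) s₀ =
          ∑ j ∈ Finset.range (N ω), fderiv ℝ (fun s => K (M ω s - μ j ω) * β j ω) s₀ :=
        fderiv_fun_sum hdiffs
      rw [h1]
      exact Finset.sum_congr rfl fun j _ => fderiv_mul_const (hψdiff j s₀) (β j ω)
    have hexp : levyField N μ β M K ω (s₀ + u) - levyField N μ β M K ω s₀ -
        fderiv ℝ (levyField N μ β M K ω) s₀ u
        = ∑ j ∈ Finset.range (N ω), (K (M ω (s₀ + u) - μ j ω) - K (M ω s₀ - μ j ω) -
            fderiv ℝ (fun s => K (M ω s - μ j ω)) s₀ u) * β j ω := by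
      rw [hsum_eq]
      simp only [levyField]
      have h2 : (∑ j ∈ Finset.range (N ω),
          β j ω • fderiv ℝ (fun s => K (M ω s - μ j ω)) s₀) u
          = ∑ j ∈ Finset.range (N ω),
            β j ω * fderiv ℝ (fun s => K (M ω s - μ j ω)) s₀ u := by
        simp [ContinuousLinearMap.sum_apply]
      rw [h2, ← Finset.sum_sub_distrib, ← Finset.sum_sub_distrib]
      exact Finset.sum_congr rfl fun j _ => by ring
    rw [hexp]
    calc |∑ j ∈ Finset.range (N ω), (K (M ω (s₀ + u) - μ j ω) - K (M ω s₀ - μ j ω) -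
            fderiv ℝ (fun s => K (M ω s - μ j ω)) s₀ u) * β j ω|
        ≤ ∑ j ∈ Finset.range (N ω), |(K (M ω (s₀ + u) - μ j ω) - K (M ω s₀ - μ j ω) -
            fderiv ℝ (fun s => K (M ω s - μ j ω)) s₀ u) * β j ω| :=
          Finset.abs_sum_le_sum_abs _ _
      _ ≤ ∑ j ∈ Finset.range (N ω), L * (‖u‖ * ‖u‖) * |β j ω| := by
          refine Finset.sum_le_sum fun j _ => ?_
          rw [abs_mul]
          exact mul_le_mul_of_nonneg_right (htaylor j) (abs_nonneg _)
      _ = L * (‖u‖ * ‖u‖) * ∑ j ∈ Finset.range (N ω), |β j ω| := by rw [Finset.mul_sum]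
  have hI : ∫⁻ ω, ENNReal.ofReal ((∑ j ∈ Finset.range (N ω), |β j ω|) ^ r) ∂P < ⊤ :=
    aux_moment P lam N hNmeas hNpois μ β hμβmeas M hMmeas hNindep hident hr hβr
  set B' : ℝ := (∫⁻ ω, ENNReal.ofReal ((∑ j ∈ Finset.range (N ω), |β j ω|) ^ r) ∂P).toReal
    with hB'
  have hB'0 : 0 ≤ B' := ENNReal.toReal_nonneg
  have hDmeasAE : ∀ u : Fin p → ℝ,
      AEMeasurable (fun ω => fderiv ℝ (levyField N μ β M K ω) s₀ u) P := by
    intro u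
    have happrox : ∀ n : ℕ, Measurable fun ω =>
        (n:ℝ) • (levyField N μ β M K ω (s₀ + (n:ℝ)⁻¹ • u) - levyField N μ β M K ω s₀) :=
      fun n => by exact ((hFmeas _).sub (hFmeas _)).const_smul ((n:ℝ))
    refine aemeasurable_of_tendsto_metrizable_ae' (fun n => (happrox n).aemeasurable) ?_
    refine hdiffAE.mono fun ω hω => ?_
    have hc : Tendsto (fun n : ℕ => ‖(n:ℝ)‖) atTop atTop := by
      have h5 : (fun n : ℕ => ‖(n:ℝ)‖) = fun n : ℕ => (n:ℝ) :=
        funext fun n => Real.norm_natCast n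
      rw [h5]; exact tendsto_natCast_atTop_atTop
    exact (hω s₀).hasFDerivAt.lim u hc
  have hRmeas : ∀ u : Fin p → ℝ, AEStronglyMeasurable (fun ω =>
      |levyField N μ β M K ω (s₀ + u) - levyField N μ β M K ω s₀ -
        fderiv ℝ (levyField N μ β M K ω) s₀ u| ^ r) P := by
    intro u
    have h1 : AEMeasurable (fun ω => levyField N μ β M K ω (s₀ + u) -
        levyField N μ β M K ω s₀ - fderiv ℝ (levyField N μ β M K ω) s₀ u) P :=
      ((hFmeas _).aemeasurable.sub (hFmeas _).aemeasurable).sub (hDmeasAE u)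
    exact (((Real.continuous_rpow_const hr0.le).comp
      continuous_abs).measurable.comp_aemeasurable h1).aestronglyMeasurable
  have hIbound : ∀ u : Fin p → ℝ,
      (∫ ω, |levyField N μ β M K ω (s₀ + u) - levyField N μ β M K ω s₀ -
        fderiv ℝ (levyField N μ β M K ω) s₀ u| ^ r ∂P)
      ≤ L ^ r * (‖u‖ ^ r * ‖u‖ ^ r) * B' := by
    intro u
    have hnn : 0 ≤ᵐ[P] fun ω => |levyField N μ β M K ω (s₀ + u) - levyField N μ β M K ω s₀ -
        fderiv ℝ (levyField N μ β M K ω) s₀ u| ^ r :=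
      ae_of_all _ fun ω => Real.rpow_nonneg (abs_nonneg _) r
    rw [integral_eq_lintegral_of_nonneg_ae hnn (hRmeas u)]
    have hptwise : ∀ᵐ ω ∂P,
        ENNReal.ofReal (|levyField N μ β M K ω (s₀ + u) - levyField N μ β M K ω s₀ -
          fderiv ℝ (levyField N μ β M K ω) s₀ u| ^ r)
        ≤ ENNReal.ofReal (L ^ r * (‖u‖ ^ r * ‖u‖ ^ r)) *
          ENNReal.ofReal ((∑ j ∈ Finset.range (N ω), |β j ω|) ^ r) := by
      refine hM.mono fun ω hω => ?_
      have h1 := hrem ω hω u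
      have hS0 : 0 ≤ ∑ j ∈ Finset.range (N ω), |β j ω| :=
        Finset.sum_nonneg fun j _ => abs_nonneg _
      have h2 : |levyField N μ β M K ω (s₀ + u) - levyField N μ β M K ω s₀ -
          fderiv ℝ (levyField N μ β M K ω) s₀ u| ^ r ≤
          (L * (‖u‖ * ‖u‖) * ∑ j ∈ Finset.range (N ω), |β j ω|) ^ r :=
        Real.rpow_le_rpow (abs_nonneg _) h1 hr0.le
      have h3 : (L * (‖u‖ * ‖u‖) * ∑ j ∈ Finset.range (N ω), |β j ω|) ^ r
          = L ^ r * (‖u‖ ^ r * ‖u‖ ^ r) * (∑ j ∈ Finset.range (N ω), |β j ω|) ^ r := by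
        rw [Real.mul_rpow (by positivity) hS0, Real.mul_rpow hL0 (by positivity),
          Real.mul_rpow (norm_nonneg u) (norm_nonneg u)]
      calc ENNReal.ofReal (|levyField N μ β M K ω (s₀ + u) - levyField N μ β M K ω s₀ -
            fderiv ℝ (levyField N μ β M K ω) s₀ u| ^ r)
          ≤ ENNReal.ofReal (L ^ r * (‖u‖ ^ r * ‖u‖ ^ r) *
            (∑ j ∈ Finset.range (N ω), |β j ω|) ^ r) :=
            ENNReal.ofReal_le_ofReal (h2.trans_eq h3)
        _ = ENNReal.ofReal (L ^ r * (‖u‖ ^ r * ‖u‖ ^ r)) *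
            ENNReal.ofReal ((∑ j ∈ Finset.range (N ω), |β j ω|) ^ r) :=
            ENNReal.ofReal_mul (by positivity)
    have h4 : ∫⁻ ω, ENNReal.ofReal (|levyField N μ β M K ω (s₀ + u) -
        levyField N μ β M K ω s₀ - fderiv ℝ (levyField N μ β M K ω) s₀ u| ^ r) ∂P
        ≤ ENNReal.ofReal (L ^ r * (‖u‖ ^ r * ‖u‖ ^ r)) *
          ∫⁻ ω, ENNReal.ofReal ((∑ j ∈ Finset.range (N ω), |β j ω|) ^ r) ∂P := by
      calc ∫⁻ ω, ENNReal.ofReal (|levyField N μ β M K ω (s₀ + u) -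
            levyField N μ β M K ω s₀ - fderiv ℝ (levyField N μ β M K ω) s₀ u| ^ r) ∂P
          ≤ ∫⁻ ω, ENNReal.ofReal (L ^ r * (‖u‖ ^ r * ‖u‖ ^ r)) *
            ENNReal.ofReal ((∑ j ∈ Finset.range (N ω), |β j ω|) ^ r) ∂P :=
            lintegral_mono_ae hptwise
        _ = _ := lintegral_const_mul' _ _ ENNReal.ofReal_ne_top
    calc (∫⁻ ω, ENNReal.ofReal (|levyField N μ β M K ω (s₀ + u) -
          levyField N μ β M K ω s₀ - fderiv ℝ (levyField N μ β M K ω) s₀ u| ^ r) ∂P).toReal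
        ≤ (ENNReal.ofReal (L ^ r * (‖u‖ ^ r * ‖u‖ ^ r)) *
          ∫⁻ ω, ENNReal.ofReal ((∑ j ∈ Finset.range (N ω), |β j ω|) ^ r) ∂P).toReal :=
          ENNReal.toReal_mono (ENNReal.mul_ne_top ENNReal.ofReal_ne_top hI.ne) h4
      _ = L ^ r * (‖u‖ ^ r * ‖u‖ ^ r) * B' := by
          rw [ENNReal.toReal_mul, ENNReal.toReal_ofReal (by positivity), hB']
  have hInn : ∀ u : Fin p → ℝ, 0 ≤ ∫ ω, |levyField N μ β M K ω (s₀ + u) -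
      levyField N μ β M K ω s₀ - fderiv ℝ (levyField N μ β M K ω) s₀ u| ^ r ∂P :=
    fun u => integral_nonneg fun ω => Real.rpow_nonneg (abs_nonneg _) r
  refine squeeze_zero' (g := fun u : Fin p → ℝ => L ^ r * B' * ‖u‖ ^ r) ?_ ?_ ?_
  · refine eventually_nhdsWithin_of_forall fun u hu => ?_
    exact div_nonneg (hInn u) (Real.rpow_nonneg (norm_nonneg u) r)
  · refine eventually_nhdsWithin_of_forall fun u hu => ?_
    have hu0 : u ≠ 0 := Set.mem_compl_singleton_iff.1 hu
    have hupos : (0:ℝ) < ‖u‖ ^ r := Real.rpow_pos_of_pos (norm_pos_iff.2 hu0) r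
    have h6 : (∫ ω, |levyField N μ β M K ω (s₀ + u) - levyField N μ β M K ω s₀ -
        fderiv ℝ (levyField N μ β M K ω) s₀ u| ^ r ∂P) / ‖u‖ ^ r ≤
        (L ^ r * (‖u‖ ^ r * ‖u‖ ^ r) * B') / ‖u‖ ^ r := by
      gcongr
      exact hIbound u
    refine h6.trans_eq ?_
    field_simp
  · have h1 : Tendsto (fun u : Fin p → ℝ => ‖u‖ ^ r) (nhds 0) (nhds 0) := by
      have h2 : ContinuousAt (fun x : ℝ => x ^ r) 0 :=
        Real.continuousAt_rpow_const 0 r (Or.inr hr0.le)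
      have h3 := h2.tendsto.comp
        (tendsto_norm_zero : Tendsto (fun u : Fin p → ℝ => ‖u‖) (nhds 0) (nhds 0))
      rwa [Real.zero_rpow hr0.ne'] at h3
    have h4 := (h1.const_mul (L ^ r * B')).mono_left
      (nhdsWithin_le_nhds (s := ({0}ᶜ : Set (Fin p → ℝ))))
    simpa using h4
end

section
/- For all s₁, s₂ ∈ ℝ^p, Cov(f(s₁), f(s₂)) = λ · E[K(s₁ − μ₀) K(s₂ − μ₀) β₀²]. -/
open MeasureTheory ProbabilityTheory Filter

open scoped ENNReal NNReal

lemma pois_shift1 (r : ℝ≥0) (n : ℕ) :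
    poissonPMFReal r (n + 1) * (↑(n + 1) : ℝ) = r * poissonPMFReal r n := by
  unfold poissonPMFReal
  have h1 : ((n + 1).factorial : ℝ) = (n + 1) * n.factorial := by
    rw [Nat.factorial_succ]; push_cast; ring
  have h2 : (n.factorial : ℝ) ≠ 0 := Nat.cast_ne_zero.2 n.factorial_ne_zero
  have h3 : ((n : ℝ) + 1) ≠ 0 := by positivity
  rw [h1]
  field_simp
  push_cast
  ring

lemma pois_hasSum1 (r : ℝ≥0) :
    HasSum (fun n => poissonPMFReal r n * n) (r : ℝ) := by
  have h : HasSum (fun n => poissonPMFReal r (n + 1) * (↑(n + 1) : ℝ)) (r : ℝ) := by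
    simp only [pois_shift1]
    simpa [poissonPMFReal] using (poissonPMFRealSum r).mul_left (r : ℝ)
  have := (hasSum_nat_add_iff (f := fun n => poissonPMFReal r n * n) 1).1 h
  simpa using this

lemma pois_shift2 (r : ℝ≥0) (n : ℕ) :
    poissonPMFReal r (n + 2) * ((↑(n + 2) : ℝ) * ((↑(n + 2) : ℝ) - 1))
      = (r : ℝ) ^ 2 * poissonPMFReal r n := by
  unfold poissonPMFReal
  have h1 : ((n + 2).factorial : ℝ) = (n + 2) * ((n + 1) * n.factorial) := by
    rw [Nat.factorial_succ, Nat.factorial_succ]; push_cast; ring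
  have h2 : (n.factorial : ℝ) ≠ 0 := Nat.cast_ne_zero.2 n.factorial_ne_zero
  have h3 : ((n : ℝ) + 2) ≠ 0 := by positivity
  have h4 : ((n : ℝ) + 1) ≠ 0 := by positivity
  have h5 : ((n:ℝ) + 2) - 1 = (n:ℝ) + 1 := by ring
  rw [h1]
  push_cast
  field_simp
  ring

lemma pois_hasSum2 (r : ℝ≥0) :
    HasSum (fun n => poissonPMFReal r n * ((n : ℝ) * ((n : ℝ) - 1))) ((r : ℝ) ^ 2) := by
  have h : HasSum (fun n => poissonPMFReal r (n + 2) * ((↑(n + 2) : ℝ) * ((↑(n + 2) : ℝ) - 1)))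
      ((r : ℝ) ^ 2) := by
    simp only [pois_shift2]
    simpa [poissonPMFReal] using (poissonPMFRealSum r).mul_left ((r : ℝ) ^ 2)
  have := (hasSum_nat_add_iff
    (f := fun n => poissonPMFReal r n * ((n : ℝ) * ((n : ℝ) - 1))) 2).1 h
  simpa [Finset.sum_range_succ] using this

lemma poissonMeasure_singleton (r : ℝ≥0) (n : ℕ) :
    poissonMeasure r {n} = ENNReal.ofReal (poissonPMFReal r n) := by
  rw [ProbabilityTheory.poissonMeasure_singleton]
  rfl

lemma pois_tsum_ofReal (r : ℝ≥0) {g : ℕ → ℝ} (hg : ∀ n, 0 ≤ g n) {S : ℝ}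
    (h : HasSum (fun n => poissonPMFReal r n * g n) S) :
    ∑' n, ENNReal.ofReal (g n) * poissonMeasure r {n} = ENNReal.ofReal S := by
  have hnn : ∀ n, 0 ≤ poissonPMFReal r n * g n :=
    fun n => mul_nonneg poissonPMFReal_nonneg (hg n)
  calc ∑' n, ENNReal.ofReal (g n) * poissonMeasure r {n}
      = ∑' n, ENNReal.ofReal (poissonPMFReal r n * g n) := by
        refine tsum_congr fun n => ?_
        rw [_root_.poissonMeasure_singleton, ← ENNReal.ofReal_mul (hg n), mul_comm]
    _ = ENNReal.ofReal S := by
        rw [← h.tsum_eq, ← ENNReal.ofReal_tsum_of_nonneg hnn h.summable]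

lemma pois_lintegral (r : ℝ≥0) {g : ℕ → ℝ} (hg : ∀ n, 0 ≤ g n) {S : ℝ}
    (h : HasSum (fun n => poissonPMFReal r n * g n) S) :
    ∫⁻ n, ENNReal.ofReal (g n) ∂(poissonMeasure r) = ENNReal.ofReal S := by
  rw [lintegral_countable']
  exact pois_tsum_ofReal r hg h

lemma pois_lintegral_id (r : ℝ≥0) :
    ∫⁻ n, (n : ℝ≥0∞) ∂(poissonMeasure r) = (r : ℝ≥0∞) := by
  have : ∀ n : ℕ, (n : ℝ≥0∞) = ENNReal.ofReal (n : ℝ) := fun n =>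
    (ENNReal.ofReal_natCast n).symm
  simp_rw [this]
  rw [pois_lintegral r (fun n => Nat.cast_nonneg n) (pois_hasSum1 r)]
  exact ENNReal.ofReal_coe_nnreal

lemma pois_lintegral_sq (r : ℝ≥0) :
    ∫⁻ n, (n : ℝ≥0∞) ^ 2 ∂(poissonMeasure r) = ENNReal.ofReal ((r : ℝ) ^ 2 + r) := by
  have h : HasSum (fun n => poissonPMFReal r n * ((n : ℝ) ^ 2)) ((r : ℝ) ^ 2 + r) := by
    have := (pois_hasSum2 r).add (pois_hasSum1 r)
    convert this using 2 with n
    ring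
  have : ∀ n : ℕ, (n : ℝ≥0∞) ^ 2 = ENNReal.ofReal ((n : ℝ) ^ 2) := fun n => by
    rw [ENNReal.ofReal_pow (Nat.cast_nonneg n), ENNReal.ofReal_natCast]
  simp_rw [this]
  exact pois_lintegral r (fun n => sq_nonneg _) h

lemma integral_comp_pair {Ω α : Type*} [MeasurableSpace Ω] [MeasurableSpace α]
    (P : Measure Ω) [IsProbabilityMeasure P]
    (N : Ω → ℕ) (hN : Measurable N) (V : Ω → α) (hV : Measurable V)
    (hprod : P.map (fun ω => (N ω, V ω)) = (P.map N).prod (P.map V))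
    (F : ℕ → α → ℝ) (hF : ∀ n, Measurable (F n))
    (φ : ℕ → ℝ≥0∞) (hφ : ∀ n, ∫⁻ ω, ‖F n (V ω)‖₊ ∂P ≤ φ n)
    (hφsum : ∫⁻ n, φ n ∂(P.map N) ≠ ∞) :
    Integrable (fun ω => F (N ω) (V ω)) P ∧
    ∫ ω, F (N ω) (V ω) ∂P
      = ∑' n, ((P.map N) {n}).toReal * ∫ ω, F n (V ω) ∂P := by
  haveI : IsProbabilityMeasure (P.map N) := Measure.isProbabilityMeasure_map hN.aemeasurable
  haveI : IsProbabilityMeasure (P.map V) := Measure.isProbabilityMeasure_map hV.aemeasurable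
  set G : ℕ × α → ℝ := fun z => F z.1 z.2 with hG
  have hGmeas : Measurable G := by
    have h : Measurable fun z : α × ℕ => F z.2 z.1 :=
      measurable_from_prod_countable_left (fun n => hF n)
    exact h.comp measurable_swap
  have hpair : Measurable fun ω => (N ω, V ω) := hN.prodMk hV
  -- lintegral bound on the product space
  have hlint : ∫⁻ z, ‖G z‖₊ ∂((P.map N).prod (P.map V)) ≠ ∞ := by
    rw [lintegral_prod _ hGmeas.nnnorm.coe_nnreal_ennreal.aemeasurable]
    have hle : ∫⁻ n, ∫⁻ v, ‖G (n, v)‖₊ ∂(P.map V) ∂(P.map N) ≤ ∫⁻ n, φ n ∂(P.map N) := by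
      refine lintegral_mono fun n => ?_
      rw [lintegral_map (hF n).nnnorm.coe_nnreal_ennreal hV]
      exact hφ n
    exact (lt_of_le_of_lt hle hφsum.lt_top).ne
  have hGint : Integrable G ((P.map N).prod (P.map V)) :=
    ⟨hGmeas.aestronglyMeasurable, hlint.lt_top⟩
  have hint : Integrable (fun ω => F (N ω) (V ω)) P := by
    have h2 : Integrable G (P.map fun ω => (N ω, V ω)) := by rwa [hprod]
    exact (integrable_map_measure hGmeas.aestronglyMeasurable hpair.aemeasurable).1 h2
  refine ⟨hint, ?_⟩
  have h1 : ∫ ω, F (N ω) (V ω) ∂P = ∫ z, G z ∂((P.map N).prod (P.map V)) := by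
    rw [← hprod, integral_map hpair.aemeasurable hGmeas.aestronglyMeasurable]
  rw [h1, integral_prod G hGint, integral_countable' hGint.integral_prod_left]
  refine tsum_congr fun n => ?_
  rw [smul_eq_mul, integral_map hV.aemeasurable (hF n).aestronglyMeasurable]
  rfl

/-- **Covariance of the Lévy random field at a fixed time.**
If `N ~ Poisson (λ)` is independent of the i.i.d. sequence `((μ_j, β_j))_j`, `E [β₀²] < ∞`
and `K` is bounded measurable, then for all `s₁, s₂`,
`Cov (f (s₁), f (s₂)) = λ * E [K (s₁ - μ₀) K (s₂ - μ₀) β₀²]`, where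
`f (s) = ∑_{j < N} K (s - μ_j) β_j`. -/
theorem levyField_cov
    {Ω : Type*} [MeasurableSpace Ω] (P : Measure Ω) [IsProbabilityMeasure P]
    (p : ℕ) (hp : 1 ≤ p) (lam : NNReal) (hlam : 0 < lam)
    (N : Ω → ℕ) (hNmeas : Measurable N) (hNpois : P.map N = poissonMeasure lam)
    (μ : ℕ → Ω → (Fin p → ℝ)) (β : ℕ → Ω → ℝ)
    (hμβmeas : ∀ j, Measurable (fun ω => (μ j ω, β j ω)))
    (hiid : iIndepFun (fun j ω => (μ j ω, β j ω)) P)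
    (hident : ∀ j, P.map (fun ω => (μ j ω, β j ω)) = P.map (fun ω => (μ 0 ω, β 0 ω)))
    (hNindep : IndepFun N (fun ω => fun j => (μ j ω, β j ω)) P)
    (hβsq : MemLp (β 0) 2 P)
    (K : (Fin p → ℝ) → ℝ) (hKmeas : Measurable K) (hKbdd : ∃ C, ∀ x, |K x| ≤ C) :
    ∀ s₁ s₂ : Fin p → ℝ,
      covar P (fun ω => ∑ j ∈ Finset.range (N ω), K (s₁ - μ j ω) * β j ω)
              (fun ω => ∑ j ∈ Finset.range (N ω), K (s₂ - μ j ω) * β j ω)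
        = (lam : ℝ) * ∫ ω, K (s₁ - μ 0 ω) * K (s₂ - μ 0 ω) * (β 0 ω) ^ 2 ∂P := by
  obtain ⟨C, hC⟩ := hKbdd
  intro s₁ s₂
  set V : Ω → (ℕ → (Fin p → ℝ) × ℝ) := fun ω j => (μ j ω, β j ω) with hVdef
  have hVmeas : Measurable V := measurable_pi_lambda _ hμβmeas
  have hprodm : P.map (fun ω => (N ω, V ω)) = (P.map N).prod (P.map V) :=
    (indepFun_iff_map_prod_eq_prod_map_map hNmeas.aemeasurable hVmeas.aemeasurable).1 hNindep
  -- the kernel functions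
  set gK : (Fin p → ℝ) → ((Fin p → ℝ) × ℝ) → ℝ := fun s q => K (s - q.1) * q.2 with hgKdef
  have hgmeas : ∀ s, Measurable (gK s) :=
    fun s => (hKmeas.comp (measurable_const.sub measurable_fst)).mul measurable_snd
  -- identical distribution transfer
  have hidentg : ∀ (g : ((Fin p → ℝ) × ℝ) → ℝ), Measurable g → ∀ j,
      ∫ ω, g (μ j ω, β j ω) ∂P = ∫ ω, g (μ 0 ω, β 0 ω) ∂P := by
    intro g hg j
    rw [← integral_map (hμβmeas j).aemeasurable hg.aestronglyMeasurable, hident j,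
      integral_map (hμβmeas 0).aemeasurable hg.aestronglyMeasurable]
  have hidentl : ∀ (g : ((Fin p → ℝ) × ℝ) → ℝ≥0∞), Measurable g → ∀ j,
      ∫⁻ ω, g (μ j ω, β j ω) ∂P = ∫⁻ ω, g (μ 0 ω, β 0 ω) ∂P := by
    intro g hg j
    rw [← lintegral_map hg (hμβmeas j), hident j, lintegral_map hg (hμβmeas 0)]
  -- all βⱼ are in L²
  have hβ : ∀ j, MemLp (β j) 2 P := by
    intro j
    have h0 : MemLp (fun x : (Fin p → ℝ) × ℝ => x.2) 2 (P.map (fun ω => (μ j ω, β j ω))) := by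
      rw [hident j]
      exact (memLp_map_measure_iff measurable_snd.aestronglyMeasurable
        (hμβmeas 0).aemeasurable).2 hβsq
    exact (memLp_map_measure_iff measurable_snd.aestronglyMeasurable
      (hμβmeas j).aemeasurable).1 h0
  have hC0 : 0 ≤ C := le_trans (abs_nonneg _) (hC 0)
  -- the summands
  have hXmeas : ∀ s j, Measurable (fun ω => K (s - μ j ω) * β j ω) :=
    fun s j => (hgmeas s).comp (hμβmeas j)
  have hXL2 : ∀ s j, MemLp (fun ω => K (s - μ j ω) * β j ω) 2 P := by
    intro s j
    refine MemLp.of_le ((hβ j).const_mul C) (hXmeas s j).aestronglyMeasurable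
      (ae_of_all _ fun ω => ?_)
    simp only [Real.norm_eq_abs, abs_mul]
    calc |K (s - μ j ω)| * |β j ω| ≤ C * |β j ω| :=
          mul_le_mul_of_nonneg_right (hC _) (abs_nonneg _)
      _ ≤ |C| * |β j ω| := mul_le_mul_of_nonneg_right (le_abs_self C) (abs_nonneg _)
  have hXint : ∀ s j, Integrable (fun ω => K (s - μ j ω) * β j ω) P :=
    fun s j => (hXL2 s j).integrable one_le_two
  have hXYint : ∀ s s' j k,
      Integrable (fun ω => (K (s - μ j ω) * β j ω) * (K (s' - μ k ω) * β k ω)) P := by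
    intro s s' j k
    rw [← memLp_one_iff_integrable]
    have h12 : (1 : ℝ≥0∞) / 1 = 1 / 2 + 1 / 2 := by
      rw [one_div_one, ENNReal.div_add_div_same, one_add_one_eq_two,
        ENNReal.div_self (by norm_num) (by norm_num)]
    exact (hXL2 s' k).smul (hXL2 s j)
  -- the basic integrals
  set m₁ : ℝ := ∫ ω, K (s₁ - μ 0 ω) * β 0 ω ∂P with hm₁def
  set m₂ : ℝ := ∫ ω, K (s₂ - μ 0 ω) * β 0 ω ∂P with hm₂def
  set a : ℝ := ∫ ω, (K (s₁ - μ 0 ω) * β 0 ω) * (K (s₂ - μ 0 ω) * β 0 ω) ∂P with hadef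
  have hm : ∀ s j, ∫ ω, K (s - μ j ω) * β j ω ∂P = ∫ ω, K (s - μ 0 ω) * β 0 ω ∂P :=
    fun s j => hidentg (gK s) (hgmeas s) j
  have hdiag : ∀ j, ∫ ω, (K (s₁ - μ j ω) * β j ω) * (K (s₂ - μ j ω) * β j ω) ∂P = a :=
    fun j => hidentg (fun q => gK s₁ q * gK s₂ q) ((hgmeas s₁).mul (hgmeas s₂)) j
  have hcross : ∀ j k, j ≠ k →
      ∫ ω, (K (s₁ - μ j ω) * β j ω) * (K (s₂ - μ k ω) * β k ω) ∂P = m₁ * m₂ := by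
    intro j k hjk
    have hind : IndepFun (fun ω => (μ j ω, β j ω)) (fun ω => (μ k ω, β k ω)) P :=
      hiid.indepFun hjk
    have h2 : IndepFun (fun ω => K (s₁ - μ j ω) * β j ω) (fun ω => K (s₂ - μ k ω) * β k ω) P :=
      hind.comp (hgmeas s₁) (hgmeas s₂)
    have h3 := h2.integral_mul_eq_mul_integral (hXint s₁ j).aestronglyMeasurable
      (hXint s₂ k).aestronglyMeasurable
    calc ∫ ω, (K (s₁ - μ j ω) * β j ω) * (K (s₂ - μ k ω) * β k ω) ∂P
        = (∫ ω, K (s₁ - μ j ω) * β j ω ∂P) * ∫ ω, K (s₂ - μ k ω) * β k ω ∂P := h3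
      _ = m₁ * m₂ := by rw [hm s₁ j, hm s₂ k]
  -- expectations of the partial sums
  have hSval1 : ∀ n, ∫ ω, (∑ j ∈ Finset.range n, K (s₁ - μ j ω) * β j ω) ∂P = n * m₁ := by
    intro n
    rw [integral_finset_sum _ fun j _ => hXint s₁ j]
    rw [Finset.sum_congr rfl fun j _ => hm s₁ j, Finset.sum_const, Finset.card_range,
      nsmul_eq_mul]
  have hSval2 : ∀ n, ∫ ω, (∑ j ∈ Finset.range n, K (s₂ - μ j ω) * β j ω) ∂P = n * m₂ := by
    intro n
    rw [integral_finset_sum _ fun j _ => hXint s₂ j]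
    rw [Finset.sum_congr rfl fun j _ => hm s₂ j, Finset.sum_const, Finset.card_range,
      nsmul_eq_mul]
  have hSSval : ∀ n, ∫ ω, (∑ j ∈ Finset.range n, K (s₁ - μ j ω) * β j ω) *
      (∑ j ∈ Finset.range n, K (s₂ - μ j ω) * β j ω) ∂P
      = n * a + (n * (n - 1) : ℝ) * (m₁ * m₂) := by
    intro n
    have hexp : ∀ ω, (∑ j ∈ Finset.range n, K (s₁ - μ j ω) * β j ω) *
        (∑ j ∈ Finset.range n, K (s₂ - μ j ω) * β j ω)
        = ∑ j ∈ Finset.range n, ∑ k ∈ Finset.range n,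
            (K (s₁ - μ j ω) * β j ω) * (K (s₂ - μ k ω) * β k ω) := by
      intro ω; rw [Finset.sum_mul_sum]
    simp_rw [hexp]
    rw [integral_finset_sum _ fun j _ => integrable_finset_sum _ fun k _ => hXYint s₁ s₂ j k]
    have hrow : ∀ j ∈ Finset.range n,
        ∫ ω, ∑ k ∈ Finset.range n, (K (s₁ - μ j ω) * β j ω) * (K (s₂ - μ k ω) * β k ω) ∂P
          = (m₁ * m₂) * n + (a - m₁ * m₂) := by
      intro j hj
      rw [integral_finset_sum _ fun k _ => hXYint s₁ s₂ j k]
      have : ∀ k ∈ Finset.range n,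
          ∫ ω, (K (s₁ - μ j ω) * β j ω) * (K (s₂ - μ k ω) * β k ω) ∂P
            = (m₁ * m₂) + (if j = k then a - m₁ * m₂ else 0) := by
        intro k _
        by_cases hjk : j = k
        · subst hjk; simp [hdiag j]
        · simp [hjk, hcross j k hjk]
      rw [Finset.sum_congr rfl this, Finset.sum_add_distrib, Finset.sum_const,
        Finset.card_range, Finset.sum_ite_eq, if_pos hj, nsmul_eq_mul]
      ring
    rw [Finset.sum_congr rfl hrow, Finset.sum_const, Finset.card_range, nsmul_eq_mul]
    ring
  -- lintegral constants
  have hc₁fin : ∀ s : Fin p → ℝ, (∫⁻ ω, ‖K (s - μ 0 ω) * β 0 ω‖₊ ∂P) ≠ ∞ :=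
    fun s => (hXint s 0).2.ne
  have hlX : ∀ (s : Fin p → ℝ) j, ∫⁻ ω, ‖K (s - μ j ω) * β j ω‖₊ ∂P
      = ∫⁻ ω, ‖K (s - μ 0 ω) * β 0 ω‖₊ ∂P :=
    fun s j => hidentl (fun q => (‖gK s q‖₊ : ℝ≥0∞)) ((hgmeas s).nnnorm.coe_nnreal_ennreal) j
  have hφ1 : ∀ (s : Fin p → ℝ) (n : ℕ),
      ∫⁻ ω, ‖∑ j ∈ Finset.range n, K (s - μ j ω) * β j ω‖₊ ∂P
        ≤ (n : ℝ≥0∞) * ∫⁻ ω, ‖K (s - μ 0 ω) * β 0 ω‖₊ ∂P := by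
    intro s n
    calc ∫⁻ ω, ‖∑ j ∈ Finset.range n, K (s - μ j ω) * β j ω‖₊ ∂P
        ≤ ∫⁻ ω, ∑ j ∈ Finset.range n, (‖K (s - μ j ω) * β j ω‖₊ : ℝ≥0∞) ∂P := by
          refine lintegral_mono fun ω => ?_
          rw [← ENNReal.coe_finset_sum]
          exact ENNReal.coe_le_coe.2 (nnnorm_sum_le _ _)
      _ = ∑ j ∈ Finset.range n, ∫⁻ ω, (‖K (s - μ j ω) * β j ω‖₊ : ℝ≥0∞) ∂P :=
          lintegral_finset_sum _ fun j _ => (hXmeas s j).nnnorm.coe_nnreal_ennreal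
      _ = (n : ℝ≥0∞) * ∫⁻ ω, ‖K (s - μ 0 ω) * β 0 ω‖₊ ∂P := by
          rw [Finset.sum_congr rfl fun j _ => hlX s j, Finset.sum_const, Finset.card_range,
            nsmul_eq_mul]
  have hφsum1 : ∀ s : Fin p → ℝ,
      (∫⁻ n, (n : ℝ≥0∞) * ∫⁻ ω, ‖K (s - μ 0 ω) * β 0 ω‖₊ ∂P ∂(P.map N)) ≠ ∞ := by
    intro s
    rw [hNpois, lintegral_mul_const _ measurable_from_top, pois_lintegral_id]
    exact ENNReal.mul_ne_top ENNReal.coe_ne_top (hc₁fin s)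
  have hF1meas : ∀ (s : Fin p → ℝ) (n : ℕ),
      Measurable (fun v : ℕ → (Fin p → ℝ) × ℝ => ∑ j ∈ Finset.range n, K (s - (v j).1) * (v j).2) :=
    fun s n => Finset.measurable_sum _ fun j _ => (hgmeas s).comp (measurable_pi_apply j)
  have key1 := integral_comp_pair P N hNmeas V hVmeas hprodm
    (fun n v => ∑ j ∈ Finset.range n, K (s₁ - (v j).1) * (v j).2) (hF1meas s₁)
    (fun n => (n : ℝ≥0∞) * ∫⁻ ω, ‖K (s₁ - μ 0 ω) * β 0 ω‖₊ ∂P) (fun n => hφ1 s₁ n) (hφsum1 s₁)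
  have key2 := integral_comp_pair P N hNmeas V hVmeas hprodm
    (fun n v => ∑ j ∈ Finset.range n, K (s₂ - (v j).1) * (v j).2) (hF1meas s₂)
    (fun n => (n : ℝ≥0∞) * ∫⁻ ω, ‖K (s₂ - μ 0 ω) * β 0 ω‖₊ ∂P) (fun n => hφ1 s₂ n) (hφsum1 s₂)
  -- second moments
  have hdfin : ∀ s : Fin p → ℝ, (∫⁻ ω, (‖K (s - μ 0 ω) * β 0 ω‖₊ : ℝ≥0∞) ^ 2 ∂P) ≠ ∞ := by
    intro s
    have h2 := ((memLp_two_iff_integrable_sq (hXmeas s 0).aestronglyMeasurable).1 (hXL2 s 0)).2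
    have heq : ∀ ω, ((‖K (s - μ 0 ω) * β 0 ω‖₊ : ℝ≥0∞)) ^ 2
        = (‖(K (s - μ 0 ω) * β 0 ω) ^ 2‖₊ : ℝ≥0∞) := fun ω => by
      rw [nnnorm_pow, ENNReal.coe_pow]
    simp_rw [heq]
    exact h2.ne
  have hlX2 : ∀ (s : Fin p → ℝ) j, ∫⁻ ω, (‖K (s - μ j ω) * β j ω‖₊ : ℝ≥0∞) ^ 2 ∂P
      = ∫⁻ ω, (‖K (s - μ 0 ω) * β 0 ω‖₊ : ℝ≥0∞) ^ 2 ∂P :=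
    fun s j => hidentl (fun q => (‖gK s q‖₊ : ℝ≥0∞) ^ 2) ((hgmeas s).nnnorm.coe_nnreal_ennreal.pow_const 2) j
  have hab : ∀ x y : ℝ≥0∞, x * y ≤ x ^ 2 + y ^ 2 := by
    intro x y
    rcases le_total x y with h | h
    · calc x * y ≤ y * y := mul_le_mul' h le_rfl
        _ = y ^ 2 := (sq y).symm
        _ ≤ x ^ 2 + y ^ 2 := le_add_self
    · calc x * y ≤ x * x := mul_le_mul' le_rfl h
        _ = x ^ 2 := (sq x).symm
        _ ≤ x ^ 2 + y ^ 2 := le_self_add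
  set D : ℝ≥0∞ := (∫⁻ ω, (‖K (s₁ - μ 0 ω) * β 0 ω‖₊ : ℝ≥0∞) ^ 2 ∂P)
      + ∫⁻ ω, (‖K (s₂ - μ 0 ω) * β 0 ω‖₊ : ℝ≥0∞) ^ 2 ∂P with hDdef
  have hφP : ∀ n : ℕ,
      ∫⁻ ω, ‖(∑ j ∈ Finset.range n, K (s₁ - μ j ω) * β j ω) *
          (∑ j ∈ Finset.range n, K (s₂ - μ j ω) * β j ω)‖₊ ∂P ≤ (n : ℝ≥0∞) ^ 2 * D := by
    intro n
    calc ∫⁻ ω, ‖(∑ j ∈ Finset.range n, K (s₁ - μ j ω) * β j ω) *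
            (∑ j ∈ Finset.range n, K (s₂ - μ j ω) * β j ω)‖₊ ∂P
        ≤ ∫⁻ ω, ∑ j ∈ Finset.range n, ∑ k ∈ Finset.range n,
            (‖K (s₁ - μ j ω) * β j ω‖₊ : ℝ≥0∞) * (‖K (s₂ - μ k ω) * β k ω‖₊ : ℝ≥0∞) ∂P := by
          refine lintegral_mono fun ω => ?_
          rw [← Finset.sum_mul_sum]
          calc ((‖(∑ j ∈ Finset.range n, K (s₁ - μ j ω) * β j ω) *
                  (∑ j ∈ Finset.range n, K (s₂ - μ j ω) * β j ω)‖₊ : ℝ≥0∞))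
              = (‖∑ j ∈ Finset.range n, K (s₁ - μ j ω) * β j ω‖₊ : ℝ≥0∞) *
                (‖∑ j ∈ Finset.range n, K (s₂ - μ j ω) * β j ω‖₊ : ℝ≥0∞) := by
                rw [nnnorm_mul, ENNReal.coe_mul]
            _ ≤ (∑ j ∈ Finset.range n, (‖K (s₁ - μ j ω) * β j ω‖₊ : ℝ≥0∞)) *
                ∑ k ∈ Finset.range n, (‖K (s₂ - μ k ω) * β k ω‖₊ : ℝ≥0∞) := by
                refine mul_le_mul' ?_ ?_ <;>
                  · rw [← ENNReal.coe_finset_sum]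
                    exact ENNReal.coe_le_coe.2 (nnnorm_sum_le _ _)
      _ = ∑ j ∈ Finset.range n, ∑ k ∈ Finset.range n, ∫⁻ ω,
            (‖K (s₁ - μ j ω) * β j ω‖₊ : ℝ≥0∞) * (‖K (s₂ - μ k ω) * β k ω‖₊ : ℝ≥0∞) ∂P := by
          rw [lintegral_finset_sum _ fun j _ => Finset.measurable_sum _ fun k _ =>
            (hXmeas s₁ j).nnnorm.coe_nnreal_ennreal.fun_mul (hXmeas s₂ k).nnnorm.coe_nnreal_ennreal]
          exact Finset.sum_congr rfl fun j _ => lintegral_finset_sum _ fun k _ =>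
            (hXmeas s₁ j).nnnorm.coe_nnreal_ennreal.fun_mul (hXmeas s₂ k).nnnorm.coe_nnreal_ennreal
      _ ≤ ∑ j ∈ Finset.range n, ∑ k ∈ Finset.range n, D := by
          refine Finset.sum_le_sum fun j _ => Finset.sum_le_sum fun k _ => ?_
          calc ∫⁻ ω, (‖K (s₁ - μ j ω) * β j ω‖₊ : ℝ≥0∞) * (‖K (s₂ - μ k ω) * β k ω‖₊ : ℝ≥0∞) ∂P
              ≤ ∫⁻ ω, (‖K (s₁ - μ j ω) * β j ω‖₊ : ℝ≥0∞) ^ 2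
                  + (‖K (s₂ - μ k ω) * β k ω‖₊ : ℝ≥0∞) ^ 2 ∂P :=
                lintegral_mono fun ω => hab _ _
            _ = (∫⁻ ω, (‖K (s₁ - μ j ω) * β j ω‖₊ : ℝ≥0∞) ^ 2 ∂P)
                  + ∫⁻ ω, (‖K (s₂ - μ k ω) * β k ω‖₊ : ℝ≥0∞) ^ 2 ∂P :=
                lintegral_add_left ((hXmeas s₁ j).nnnorm.coe_nnreal_ennreal.pow_const 2) _
            _ = D := by rw [hlX2 s₁ j, hlX2 s₂ k]
      _ = (n : ℝ≥0∞) ^ 2 * D := by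
          rw [Finset.sum_const, Finset.sum_const, Finset.card_range, smul_smul, nsmul_eq_mul]
          push_cast
          ring
  have hφsumP : (∫⁻ n, (n : ℝ≥0∞) ^ 2 * D ∂(P.map N)) ≠ ∞ := by
    rw [hNpois, lintegral_mul_const _ measurable_from_top, pois_lintegral_sq]
    exact ENNReal.mul_ne_top ENNReal.ofReal_ne_top
      (by rw [hDdef]; exact ENNReal.add_ne_top.2 ⟨hdfin s₁, hdfin s₂⟩)
  have keyP := integral_comp_pair P N hNmeas V hVmeas hprodm
    (fun n v => (∑ j ∈ Finset.range n, K (s₁ - (v j).1) * (v j).2) *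
      ∑ j ∈ Finset.range n, K (s₂ - (v j).1) * (v j).2)
    (fun n => (hF1meas s₁ n).mul (hF1meas s₂ n))
    (fun n => (n : ℝ≥0∞) ^ 2 * D) (fun n => hφP n) hφsumP
  -- weights
  have hw : ∀ n : ℕ, ((P.map N) {n}).toReal = poissonPMFReal lam n := by
    intro n
    rw [hNpois, _root_.poissonMeasure_singleton, ENNReal.toReal_ofReal poissonPMFReal_nonneg]
  -- the three expectations
  have hE1 : ∫ ω, (∑ j ∈ Finset.range (N ω), K (s₁ - μ j ω) * β j ω) ∂P = lam * m₁ := by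
    have h : ∫ ω, (∑ j ∈ Finset.range (N ω), K (s₁ - μ j ω) * β j ω) ∂P
        = ∑' n, ((P.map N) {n}).toReal *
            ∫ ω, (∑ j ∈ Finset.range n, K (s₁ - μ j ω) * β j ω) ∂P := key1.2
    rw [h]
    calc ∑' n, ((P.map N) {n}).toReal *
          ∫ ω, (∑ j ∈ Finset.range n, K (s₁ - μ j ω) * β j ω) ∂P
        = ∑' n, poissonPMFReal lam n * (n : ℝ) * m₁ := by
          refine tsum_congr fun n => ?_
          rw [hw n, hSval1 n, mul_assoc]
      _ = lam * m₁ := ((pois_hasSum1 lam).mul_right m₁).tsum_eq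
  have hE2 : ∫ ω, (∑ j ∈ Finset.range (N ω), K (s₂ - μ j ω) * β j ω) ∂P = lam * m₂ := by
    have h : ∫ ω, (∑ j ∈ Finset.range (N ω), K (s₂ - μ j ω) * β j ω) ∂P
        = ∑' n, ((P.map N) {n}).toReal *
            ∫ ω, (∑ j ∈ Finset.range n, K (s₂ - μ j ω) * β j ω) ∂P := key2.2
    rw [h]
    calc ∑' n, ((P.map N) {n}).toReal *
          ∫ ω, (∑ j ∈ Finset.range n, K (s₂ - μ j ω) * β j ω) ∂P
        = ∑' n, poissonPMFReal lam n * (n : ℝ) * m₂ := by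
          refine tsum_congr fun n => ?_
          rw [hw n, hSval2 n, mul_assoc]
      _ = lam * m₂ := ((pois_hasSum1 lam).mul_right m₂).tsum_eq
  have hEP : ∫ ω, (∑ j ∈ Finset.range (N ω), K (s₁ - μ j ω) * β j ω) *
      (∑ j ∈ Finset.range (N ω), K (s₂ - μ j ω) * β j ω) ∂P
      = (lam : ℝ) * a + (lam : ℝ) ^ 2 * (m₁ * m₂) := by
    have h : ∫ ω, (∑ j ∈ Finset.range (N ω), K (s₁ - μ j ω) * β j ω) *
        (∑ j ∈ Finset.range (N ω), K (s₂ - μ j ω) * β j ω) ∂P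
        = ∑' n, ((P.map N) {n}).toReal *
            ∫ ω, (∑ j ∈ Finset.range n, K (s₁ - μ j ω) * β j ω) *
              (∑ j ∈ Finset.range n, K (s₂ - μ j ω) * β j ω) ∂P := keyP.2
    rw [h]
    have hsum := ((pois_hasSum1 lam).mul_right a).add ((pois_hasSum2 lam).mul_right (m₁ * m₂))
    calc ∑' n, ((P.map N) {n}).toReal *
          ∫ ω, (∑ j ∈ Finset.range n, K (s₁ - μ j ω) * β j ω) *
            (∑ j ∈ Finset.range n, K (s₂ - μ j ω) * β j ω) ∂P
        = ∑' n, (poissonPMFReal lam n * (n : ℝ) * a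
            + poissonPMFReal lam n * ((n : ℝ) * ((n : ℝ) - 1)) * (m₁ * m₂)) := by
          refine tsum_congr fun n => ?_
          rw [hw n, hSSval n]
          ring
      _ = (lam : ℝ) * a + (lam : ℝ) ^ 2 * (m₁ * m₂) := hsum.tsum_eq
  -- conclude
  show (∫ ω, (∑ j ∈ Finset.range (N ω), K (s₁ - μ j ω) * β j ω) *
      (∑ j ∈ Finset.range (N ω), K (s₂ - μ j ω) * β j ω) ∂P)
      - (∫ ω, (∑ j ∈ Finset.range (N ω), K (s₁ - μ j ω) * β j ω) ∂P) *
        (∫ ω, (∑ j ∈ Finset.range (N ω), K (s₂ - μ j ω) * β j ω) ∂P)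
      = (lam : ℝ) * ∫ ω, K (s₁ - μ 0 ω) * K (s₂ - μ 0 ω) * (β 0 ω) ^ 2 ∂P
  rw [hEP, hE1, hE2]
  have ha : a = ∫ ω, K (s₁ - μ 0 ω) * K (s₂ - μ 0 ω) * (β 0 ω) ^ 2 ∂P := by
    rw [hadef]
    exact integral_congr_ae (Filter.Eventually.of_forall fun ω => by ring)
  rw [← ha]
  ring
end
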